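/- arXiv:math-ph/9912007 — 6 statements merged into one kernel-verified Lean document; each statement's English description precedes it below -/
import Mathlib

section
/- Let P(z) = Σ_{k≥1} P_k z^k and Q(z) = Σ_{k≥1} Q_k z^k be formal power series with zero constant terms over a field of characteristic zero containing an indeterminate ν, and let φ(z) = 1 + Σ_{n≥1} φ_n z^n be the formal monic series solution of z²φ'' + (1-ν)zφ' + P(z)zφ' + Q(z)φ = 0, determined by the recursion n(ν-n)φ_n = Q_n + Σ_{j=1}^{n-1}(jP_{n-j}+Q_{n-j})φ_j. Then φ_n = Σ_{|p|=n} Π_{j=l}^{1} ((s_{j-1} P_{p_j} + Q_{p_j})/(s_j(ν - s_j))), where the sum ranges over all compositions p = (p_1,...,p_l) of n, s_j = p_1+...+p_j, s_0 = 0, and the product is taken with factors ordered from j = l down to j = 1. -/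
/-- `psum L j` = the `j`-th left partial sum `s_j = p_1 + … + p_j` (with `s_0 = 0`). -/
def psum (L : List ℕ) (j : ℕ) : ℕ := (L.take j).sum

section Aux

variable {K : Type*} [Field K] [CharZero K] {A : Type*} [Ring A] [Algebra K A]

/-- The product term associated to a list of blocks. -/
def frobT (ν : K) (P Q : ℕ → A) (L : List ℕ) : A :=
  ((List.range L.length).reverse.map (fun j =>
    (((psum L (j + 1) : K)) * (ν - (psum L (j + 1) : K)))⁻¹ •
      ((psum L j : K) • P (L.getD j 0) + Q (L.getD j 0)))).prod

lemma frobT_nil (ν : K) (P Q : ℕ → A) : frobT ν P Q [] = 1 := rfl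

lemma psum_concat_of_le (L : List ℕ) (b : ℕ) {j : ℕ} (h : j ≤ L.length) :
    psum (L ++ [b]) j = psum L j := by
  simp [psum, List.take_append_of_le_length h]

lemma psum_concat_top (L : List ℕ) (b : ℕ) :
    psum (L ++ [b]) (L.length + 1) = L.sum + b := by
  have h : (L ++ [b]).take (L.length + 1) = L ++ [b] :=
    List.take_of_length_le (by simp)
  rw [psum, h, List.sum_append, List.sum_singleton]

lemma frobT_concat (ν : K) (P Q : ℕ → A) (L : List ℕ) (b : ℕ) :
    frobT ν P Q (L ++ [b]) =
      (((L.sum + b : ℕ) : K) * (ν - ((L.sum + b : ℕ) : K)))⁻¹ •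
        (((L.sum : ℕ) : K) • P b + Q b) * frobT ν P Q L := by
  unfold frobT
  rw [List.length_append, List.length_singleton, List.range_succ, List.reverse_append,
    List.reverse_singleton, List.singleton_append, List.map_cons, List.prod_cons]
  have h1 : psum (L ++ [b]) (L.length + 1) = L.sum + b := psum_concat_top L b
  have h2 : psum (L ++ [b]) L.length = L.sum := by
    rw [psum_concat_of_le L b le_rfl]; simp [psum]
  have h3 : (L ++ [b]).getD L.length 0 = b := by
    rw [List.getD_append_right L [b] 0 L.length le_rfl]; simp
  rw [h1, h2, h3]
  congr 2
  apply List.map_congr_left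
  intro j hj
  have hj' : j < L.length := by
    rw [List.mem_reverse, List.mem_range] at hj; exact hj
  rw [psum_concat_of_le L b (by omega), psum_concat_of_le L b (by omega),
    List.getD_append L [b] 0 j hj']

/-- The candidate solution: sum of products over all compositions. -/
noncomputable def frobF (ν : K) (P Q : ℕ → A) (n : ℕ) : A :=
  ∑ c : Composition n, frobT ν P Q c.blocks

lemma composition_zero_blocks (c : Composition 0) : c.blocks = [] := by
  cases h : c.blocks with
  | nil => rfl
  | cons a l =>
    have hpos : 0 < a := c.blocks_pos (by rw [h]; exact List.mem_cons_self)
    have hsum := c.blocks_sum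
    rw [h, List.sum_cons] at hsum
    omega

instance uniqueCompositionZero : Unique (Composition 0) :=
  ⟨⟨⟨[], by simp, rfl⟩⟩, fun c => Composition.ext (composition_zero_blocks c)⟩

lemma frobF_zero (ν : K) (P Q : ℕ → A) : frobF ν P Q 0 = 1 := by
  rw [frobF, Fintype.sum_unique]
  simp [composition_zero_blocks, frobT_nil]

lemma frobF_rec (ν : K) (P Q : ℕ → A) (n : ℕ) (hn : 0 < n) :
    frobF ν P Q n = (((n : K)) * (ν - (n : K)))⁻¹ •
      (Q n + ∑ j ∈ Finset.Ico 1 n, (((j : ℕ) : K) • P (n - j) + Q (n - j)) * frobF ν P Q j) := by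
  classical
  -- the appending map
  have hb : ∀ (j : Fin n), 0 < n - (j : ℕ) := fun j => Nat.sub_pos_of_lt j.isLt
  set g : (Σ j : Fin n, Composition (j : ℕ)) → Composition n := fun x =>
    ⟨x.2.blocks ++ [n - (x.1 : ℕ)], by
      intro i hi
      rcases List.mem_append.1 hi with h | h
      · exact x.2.blocks_pos h
      · rw [List.mem_singleton] at h; rw [h]; exact hb x.1, by
      rw [List.sum_append, x.2.blocks_sum, List.sum_singleton]
      omega⟩ with hg
  have hgbij : Function.Bijective g := by
    constructor
    · rintro ⟨j₁, c₁⟩ ⟨j₂, c₂⟩ h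
      have hb : c₁.blocks ++ [n - (j₁ : ℕ)] = c₂.blocks ++ [n - (j₂ : ℕ)] :=
        congrArg Composition.blocks h
      have hlen : c₁.blocks.length = c₂.blocks.length := by
        have := congrArg List.length hb
        simpa using this
      obtain ⟨hL, -⟩ := List.append_inj hb hlen
      have hj : j₁ = j₂ := by
        apply Fin.ext
        have := congrArg List.sum hL
        rw [c₁.blocks_sum, c₂.blocks_sum] at this
        exact this
      subst hj
      have : c₁ = c₂ := Composition.ext hL
      rw [this]
    · intro c
      have hne : c.blocks ≠ [] := by
        intro h
        have := c.blocks_sum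
        rw [h] at this
        simp at this
        omega
      have hsum : c.blocks.dropLast.sum + c.blocks.getLast hne = n := by
        have := c.blocks_sum
        conv_lhs at this => rw [← List.dropLast_append_getLast hne]
        rw [List.sum_append, List.sum_singleton] at this
        exact this
      have hlast : 0 < c.blocks.getLast hne :=
        c.blocks_pos (List.getLast_mem hne)
      have hlt : c.blocks.dropLast.sum < n := by omega
      refine ⟨⟨⟨c.blocks.dropLast.sum, hlt⟩,
        ⟨c.blocks.dropLast, fun {i} hi => c.blocks_pos (List.dropLast_subset _ hi), rfl⟩⟩, ?_⟩
      apply Composition.ext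
      show c.blocks.dropLast ++ [n - c.blocks.dropLast.sum] = c.blocks
      have : n - c.blocks.dropLast.sum = c.blocks.getLast hne := by omega
      rw [this, List.dropLast_append_getLast hne]
  have key : frobF ν P Q n =
      ∑ x : (Σ j : Fin n, Composition (j : ℕ)), frobT ν P Q (g x).blocks :=
    (Fintype.sum_bijective g hgbij _ _ (fun x => rfl)).symm
  rw [key]
  rw [← Finset.univ_sigma_univ, Finset.sum_sigma]
  have step : ∀ j : Fin n,
      (∑ c : Composition (j : ℕ), frobT ν P Q (g ⟨j, c⟩).blocks) =
      (((n : K)) * (ν - (n : K)))⁻¹ •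
        ((((j : ℕ) : K) • P (n - (j : ℕ)) + Q (n - (j : ℕ))) * frobF ν P Q (j : ℕ)) := by
    intro j
    rw [frobF, Finset.mul_sum, Finset.smul_sum]
    apply Finset.sum_congr rfl
    intro c _
    show frobT ν P Q (c.blocks ++ [n - (j : ℕ)]) = _
    rw [frobT_concat, c.blocks_sum]
    have : (j : ℕ) + (n - (j : ℕ)) = n := by omega
    rw [this, smul_mul_assoc]
  rw [Finset.sum_congr rfl (fun j _ => step j)]
  rw [Fin.sum_univ_eq_sum_range
    (fun j => (((n : K)) * (ν - (n : K)))⁻¹ •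
      ((((j : ℕ) : K) • P (n - j) + Q (n - j)) * frobF ν P Q j)) n]
  rw [Finset.range_eq_Ico, Finset.sum_eq_sum_Ico_succ_bot hn]
  rw [smul_add, Finset.smul_sum]
  congr 1
  simp [frobF_zero]

end Aux

/-- The method of Frobenius: if `φ` is the formal monic series solution of
`z²φ'' + (1-ν)zφ' + P(z)zφ' + Q(z)φ = 0`, i.e. satisfies the recursion
`n(ν-n)φ_n = Q_n + Σ_{j=1}^{n-1} (j P_{n-j} + Q_{n-j}) φ_j`, then
`φ_n = Σ_{|p|=n} Π_{j=l}^{1} ((s_{j-1} P_{p_j} + Q_{p_j}) / (s_j (ν - s_j)))`,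
the product being ordered from `j = l` down to `j = 1`.  Here the coefficients lie in
a possibly noncommutative algebra over a characteristic zero field `K`, and `ν ∈ K` is
transcendental-like: it is not equal to any positive natural number. -/
theorem frobenius_composition_formula {K : Type*} [Field K] [CharZero K]
    {A : Type*} [Ring A] [Algebra K A]
    (ν : K) (hν : ∀ m : ℕ, 0 < m → ν ≠ (m : K))
    (P Q : ℕ → A) (φ : ℕ → A)
    (hφ0 : φ 0 = 1)
    (hrec : ∀ n : ℕ, 0 < n →
      ((n : K) * (ν - (n : K))) • φ n =
        Q n + ∑ j ∈ Finset.Ico 1 n, ((j : K) • P (n - j) + Q (n - j)) * φ j)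
    (n : ℕ) (hn : 0 < n) :
    φ n = ∑ c : Composition n,
      ((List.range c.blocks.length).reverse.map (fun j =>
        (((psum c.blocks (j + 1) : K)) * (ν - (psum c.blocks (j + 1) : K)))⁻¹ •
          ((psum c.blocks j : K) • P (c.blocks.getD j 0) + Q (c.blocks.getD j 0)))).prod := by
  have main : ∀ m : ℕ, 0 < m → φ m = frobF ν P Q m := by
    intro m
    induction m using Nat.strong_induction_on with
    | _ m ih =>
      intro hm
      have hscalar : ((m : K) * (ν - (m : K))) ≠ 0 := by
        apply mul_ne_zero
        · exact Nat.cast_ne_zero.2 hm.ne'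
        · exact sub_ne_zero.2 (hν m hm)
      have h1 := hrec m hm
      have h2 : Q m + ∑ j ∈ Finset.Ico 1 m, ((j : K) • P (m - j) + Q (m - j)) * φ j =
          Q m + ∑ j ∈ Finset.Ico 1 m, ((j : K) • P (m - j) + Q (m - j)) * frobF ν P Q j := by
        congr 1
        apply Finset.sum_congr rfl
        intro j hj
        rw [Finset.mem_Ico] at hj
        rw [ih j hj.2 hj.1]
      rw [h2] at h1
      calc φ m = ((m : K) * (ν - (m : K)))⁻¹ • (((m : K) * (ν - (m : K))) • φ m) :=
            (inv_smul_smul₀ hscalar _).symm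
        _ = ((m : K) * (ν - (m : K)))⁻¹ •
            (Q m + ∑ j ∈ Finset.Ico 1 m, ((j : K) • P (m - j) + Q (m - j)) * frobF ν P Q j) := by
            rw [h1]
        _ = frobF ν P Q m := (frobF_rec ν P Q m hm).symm
  rw [main n hn]
  rfl
end

section
/- For each composition p = (p_1,...,p_l) of n with partial sums s_j = p_1 + ... + p_j, the residue at ν = n of the rational function ν ↦ Π_{j=1}^{l} 1/(s_j(ν - s_j)) equals n/(s_p · s_{p'}), i.e. equals n divided by (s_1 s_2 ··· s_l) times the product of partial sums of the reversed composition. -/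
/-- `spr L` = `s_p = s_1 s_2 ⋯ s_l`, the product of the partial sums. -/
def spr (L : List ℕ) : ℕ := ∏ j ∈ Finset.range L.length, psum L (j + 1)

/-- For each composition `p = (p_1,…,p_l)` of `n` with partial sums `s_j`, the residue at
`ν = n` of `ν ↦ Π_{j=1}^{l} 1/(s_j(ν-s_j))`, i.e. `lim_{ν→n} (ν-n) Π_j 1/(s_j(ν-s_j))`,
equals `n/(s_p s_{p'})`. -/
theorem residue_of_composition_product (n : ℕ) (L : List ℕ)
    (hpos : ∀ x ∈ L, 0 < x) (hne : L ≠ []) (hsum : L.sum = n) :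
    Filter.Tendsto
      (fun ν : ℝ => (ν - (n : ℝ)) * ∏ j ∈ Finset.range L.length,
        ((psum L (j + 1) : ℝ) * (ν - (psum L (j + 1) : ℝ)))⁻¹)
      (nhdsWithin (n : ℝ) {(n : ℝ)}ᶜ)
      (nhds ((n : ℝ) / ((spr L : ℝ) * spr L.reverse))) := by
  obtain ⟨m, hm⟩ : ∃ m, L.length = m + 1 := by
    cases L with
    | nil => exact absurd rfl hne
    | cons a t => exact ⟨t.length, rfl⟩
  have hn : 0 < n := hsum ▸ List.sum_pos L hpos hne
  have hn0 : (n : ℝ) ≠ 0 := by positivity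
  -- partial sum facts
  have hfull : psum L L.length = n := by simp [psum, hsum]
  have hle : ∀ j, psum L j ≤ n := by
    intro j
    have := List.sum_take_add_sum_drop L j
    simp only [psum]; omega
  have hlt : ∀ j < L.length, psum L j < n := by
    intro j hj
    have h1 := List.sum_take_add_sum_drop L j
    have h2 : 0 < (L.drop j).sum := by
      apply List.sum_pos _ (fun x hx => hpos x (List.mem_of_mem_drop hx))
      intro h
      have := congrArg List.length h
      simp at this; omega
    simp only [psum]; omega
  have hpsp : ∀ j < L.length, 0 < psum L (j + 1) := by
    intro j hj
    apply List.sum_pos _ (fun x hx => hpos x (List.mem_of_mem_take hx))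
    intro h
    have := congrArg List.length h
    simp only [List.length_take, List.length_nil] at this
    omega
  -- key positivity for the first m partial sums (real versions)
  have hspos : ∀ j ∈ Finset.range m, (0:ℝ) < (psum L (j+1) : ℝ) := by
    intro j hj
    simp only [Finset.mem_range] at hj
    exact_mod_cast hpsp j (by omega)
  have hnspos : ∀ j ∈ Finset.range m, (0:ℝ) < (n:ℝ) - (psum L (j+1) : ℝ) := by
    intro j hj
    simp only [Finset.mem_range] at hj
    have := hlt (j+1) (by omega)
    have : (psum L (j+1) : ℝ) < (n:ℝ) := by exact_mod_cast this
    linarith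
  -- reverse partial sums
  have hrev : ∀ k, psum L.reverse k = n - psum L (L.length - k) := by
    intro k
    have h1 := List.sum_take_add_sum_drop L (L.length - k)
    simp only [psum, List.take_reverse, List.sum_reverse]
    omega
  -- spr computations
  have hsprL : spr L = (∏ j ∈ Finset.range m, psum L (j + 1)) * n := by
    rw [spr, hm, Finset.prod_range_succ, ← hm, hfull]
  have hsprR : spr L.reverse = (∏ j ∈ Finset.range m, (n - psum L (j + 1))) * n := by
    rw [spr, List.length_reverse]
    have hc : ∀ k ∈ Finset.range L.length,
        psum L.reverse (k + 1) = n - psum L (L.length - 1 - k) := by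
      intro k hk
      have hkk : L.length - (k + 1) = L.length - 1 - k := by omega
      rw [hrev, hkk]
    rw [Finset.prod_congr rfl hc, Finset.prod_range_reflect (fun j => n - psum L j), hm,
      Finset.prod_range_succ']
    simp [psum]
  have hsm : psum L (m + 1) = n := by rw [← hm, hfull]
  -- the simplified function
  set g : ℝ → ℝ :=
    fun ν => (n : ℝ)⁻¹ * ∏ j ∈ Finset.range m,
      ((psum L (j+1) : ℝ) * (ν - (psum L (j+1) : ℝ)))⁻¹ with hg
  have hfac : ∀ j ∈ Finset.range m,
      (psum L (j+1) : ℝ) * ((n : ℝ) - (psum L (j+1) : ℝ)) ≠ 0 :=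
    fun j hj => ne_of_gt (mul_pos (hspos j hj) (hnspos j hj))
  have hgn : g n = (n : ℝ) / ((spr L : ℝ) * spr L.reverse) := by
    have hA : ((spr L : ℕ) : ℝ) = (∏ j ∈ Finset.range m, (psum L (j+1) : ℝ)) * n := by
      rw [hsprL]; push_cast; ring
    have hB : ((spr L.reverse : ℕ) : ℝ)
        = (∏ j ∈ Finset.range m, ((n:ℝ) - (psum L (j+1) : ℝ))) * n := by
      rw [hsprR, Nat.cast_mul, Nat.cast_prod]
      congr 1
      exact Finset.prod_congr rfl fun j _ => Nat.cast_sub (hle (j+1))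
    have hApos : (0:ℝ) < ∏ j ∈ Finset.range m, (psum L (j+1) : ℝ) :=
      Finset.prod_pos hspos
    have hBpos : (0:ℝ) < ∏ j ∈ Finset.range m, ((n:ℝ) - (psum L (j+1) : ℝ)) :=
      Finset.prod_pos hnspos
    rw [hg, hA, hB]
    simp only
    rw [show (∏ j ∈ Finset.range m, ((psum L (j+1) : ℝ) * ((n:ℝ) - (psum L (j+1) : ℝ)))⁻¹)
        = ((∏ j ∈ Finset.range m, (psum L (j+1) : ℝ)) *
           ∏ j ∈ Finset.range m, ((n:ℝ) - (psum L (j+1) : ℝ)))⁻¹ from by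
      rw [← Finset.prod_mul_distrib, ← Finset.prod_inv_distrib]]
    field_simp
  have htg : Filter.Tendsto g (nhdsWithin (n:ℝ) {(n:ℝ)}ᶜ) (nhds (g n)) := by
    apply Filter.Tendsto.mono_left _ nhdsWithin_le_nhds
    apply Filter.Tendsto.const_mul
    exact tendsto_finset_prod _ fun j hj =>
      ((tendsto_const_nhds.mul (Filter.tendsto_id.sub tendsto_const_nhds)).inv₀ (hfac j hj))
  rw [← hgn]
  apply htg.congr'
  apply Filter.eventuallyEq_of_mem self_mem_nhdsWithin
  intro ν hν
  have hνn : ν - (n:ℝ) ≠ 0 := sub_ne_zero.mpr hν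
  simp only [hg]
  rw [hm, Finset.prod_range_succ, hsm]
  have key : (ν - (n:ℝ)) * ((n:ℝ) * (ν - (n:ℝ)))⁻¹ = (n:ℝ)⁻¹ := by
    rw [mul_inv]
    field_simp
  linear_combination
    (-(∏ j ∈ Finset.range m, ((psum L (j+1) : ℝ) * (ν - (psum L (j+1) : ℝ)))⁻¹)) * key
end

section
/- For 0 ≤ i ≤ n-1, with a_{n,i} = i(n-i), b_{n,i} = n-1-2i, and the substitutions u = ¼(α-β-n)(α-β+n), v = ¼(α+β+n)(2-α-β-n), the polynomial identity (α+i)(β+i)(α+n-1-i)(β+n-1-i) = (u+v+a_{n,i})(u+v+a_{n,i+1}) + b_{n,i}²·v holds in ℚ[α,β]. -/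
open MvPolynomial
set_option maxHeartbeats 1600000

/-- With `u = ¼(α-β-n)(α-β+n)` and `v = ¼(α+β+n)(2-α-β-n)` in `ℚ[α,β]`,
and `a_{n,i} = i(n-i)`, `b_{n,i} = n-1-2i`, one has
`(α+i)(β+i)(α+n-1-i)(β+n-1-i) = (u+v+a_{n,i})(u+v+a_{n,i+1}) + b_{n,i}² v`. -/
theorem eckart_parameter_identity (n : ℕ) (hn : 0 < n) (i : ℕ) (hi : i ≤ n - 1)
    (α β u v : MvPolynomial (Fin 2) ℚ)
    (hα : α = X 0) (hβ : β = X 1)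
    (hu : u = C (1 / 4 : ℚ) * ((α - β - C (n : ℚ)) * (α - β + C (n : ℚ))))
    (hv : v = C (1 / 4 : ℚ) * ((α + β + C (n : ℚ)) * (C 2 - α - β - C (n : ℚ)))) :
    (α + C (i : ℚ)) * (β + C (i : ℚ)) *
        (α + C ((n : ℚ) - 1 - i)) * (β + C ((n : ℚ) - 1 - i)) =
      (u + v + C ((i : ℚ) * ((n : ℚ) - i))) *
          (u + v + C (((i : ℚ) + 1) * ((n : ℚ) - (i + 1)))) +
        C (((n : ℚ) - 1 - 2 * i) ^ 2) * v := by
  subst hα hβ hu hv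
  apply MvPolynomial.funext
  intro x
  simp only [map_add, map_sub, map_mul, map_pow, eval_C, eval_X, map_ofNat, map_one]
  ring
end

section
/- Define ρ_n(u,v) = n · Σ (u^{o(p)} v^{e(p)})/(s_p s_{p'}), the sum over all compositions p of n whose parts all lie in {1,2}, where o(p) and e(p) count parts equal to 1 and 2 respectively. Then for n = 2m even, n!(n-1)!·ρ_n(u,v) = Π_{0<k<n, k odd} (u² + k²v), and for n = 2m+1 odd, n!(n-1)!·ρ_n(u,v) = u · Π_{0<k<n, k even} (u² + k²v). -/
open MvPolynomial

/-- The Morse spectral residue `ρ_n(u,v) = n Σ (u^{o(p)} v^{e(p)})/(s_p s_{p'})`, summed over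
all compositions of `n` with parts in `{1,2}`; here `o(p)` counts parts equal to `1` and
`e(p)` counts parts equal to `2`, and `u = X 0`, `v = X 1`. -/
noncomputable def morseRho (n : ℕ) : MvPolynomial (Fin 2) ℚ :=
  (n : ℚ) • ∑ c : Composition n,
    if ∀ p ∈ c.blocks, p = 1 ∨ p = 2 then
      ((1 : ℚ) / ((spr c.blocks : ℚ) * spr c.blocks.reverse)) •
        (X 0 ^ (c.blocks.count 1) * X 1 ^ (c.blocks.count 2))
    else 0


namespace MorseAux

/-! ### Lists of 1s and 2s summing to `m` -/

def comps : ℕ → Finset (List ℕ)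
  | 0 => {[]}
  | 1 => {[1]}
  | (m+2) => ((comps (m+1)).image (fun L => 1 :: L)) ∪ ((comps m).image (fun L => 2 :: L))

lemma mem_comps : ∀ m : ℕ, ∀ L : List ℕ,
    (L ∈ comps m ↔ (∀ p ∈ L, p = 1 ∨ p = 2) ∧ L.sum = m) := by
  intro m
  induction m using Nat.strong_induction_on with
  | _ m ih =>
    intro L
    match m with
    | 0 =>
      simp only [comps, Finset.mem_singleton]
      constructor
      · rintro rfl; simp
      · rintro ⟨h1, h2⟩
        cases L with
        | nil => rfl
        | cons p t =>
          rcases h1 p (by simp) with rfl | rfl <;> simp at h2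
    | 1 =>
      simp only [comps, Finset.mem_singleton]
      constructor
      · rintro rfl; simp
      · rintro ⟨h1, h2⟩
        cases L with
        | nil => simp at h2
        | cons p t =>
          rcases h1 p (by simp) with rfl | rfl
          · simp at h2
            cases t with
            | nil => rfl
            | cons q s =>
              rcases h1 q (by simp) with rfl | rfl <;> simp at h2 <;> omega
          · simp at h2; omega
    | (m+2) =>
      simp only [comps, Finset.mem_union, Finset.mem_image]
      constructor
      · rintro (⟨M, hM, rfl⟩ | ⟨M, hM, rfl⟩)
        · rcases (ih (m+1) (by omega) M).1 hM with ⟨h1, h2⟩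
          refine ⟨?_, by simp [h2]; try omega⟩
          intro p hp
          rcases List.mem_cons.1 hp with rfl | hp
          · left; rfl
          · exact h1 p hp
        · rcases (ih m (by omega) M).1 hM with ⟨h1, h2⟩
          refine ⟨?_, by simp [h2]; try omega⟩
          intro p hp
          rcases List.mem_cons.1 hp with rfl | hp
          · right; rfl
          · exact h1 p hp
      · rintro ⟨h1, h2⟩
        cases L with
        | nil => simp at h2
        | cons p t =>
          rcases h1 p (by simp) with rfl | rfl
          · left
            refine ⟨t, (ih (m+1) (by omega) t).2 ⟨fun q hq => h1 q (by simp [hq]), by simp at h2; omega⟩, rfl⟩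
          · right
            refine ⟨t, (ih m (by omega) t).2 ⟨fun q hq => h1 q (by simp [hq]), by simp at h2; omega⟩, rfl⟩

/-! ### The tridiagonal recurrence `D` (Sylvester–Kac polynomials) -/

def D (a b : ℚ) (n : ℕ) : ℕ → ℚ
  | 0 => 1
  | 1 => a
  | (j+2) => a * D a b n (j+1) + ((j:ℚ)+1) * ((n:ℚ) - ((j:ℚ)+1)) * b * D a b n j

variable (a b : ℚ)

lemma D_shift (n : ℕ) : ∀ j : ℕ,
    D a b (n+2) (j+2) = D a b n (j+2) + ((j:ℚ)+2) * ((j:ℚ)+1) * b * D a b n j := by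
  intro j
  induction j using Nat.twoStepInduction with
  | zero => simp [D]; ring
  | one => simp [D]; ring
  | more j ih1 ih2 =>
    have e1 : D a b (n+2) (j+2+2)
        = a * D a b (n+2) (j+3) + ((j:ℚ)+3) * (((n:ℚ)+2) - ((j:ℚ)+3)) * b * D a b (n+2) (j+2) := by
      rw [D]; push_cast; ring
    have h13 : j+1+2 = j+3 := by omega
    rw [h13] at ih2
    push_cast at ih2
    have e4 : D a b n (j+2+2)
        = a * D a b n (j+3) + ((j:ℚ)+3) * ((n:ℚ) - ((j:ℚ)+3)) * b * D a b n (j+2) := by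
      rw [D]; push_cast; ring
    have e5 : D a b n (j+2) = a * D a b n (j+1) + ((j:ℚ)+1) * ((n:ℚ) - ((j:ℚ)+1)) * b * D a b n j := by
      rw [D]
    rw [e1, ih1, ih2, e4, e5]
    push_cast
    ring

lemma D_diag_succ (n : ℕ) : D a b n (n+1) = a * D a b n n := by
  cases n with
  | zero => simp [D]
  | succ m =>
    show D a b (m+1) (m+2) = _
    rw [D]
    push_cast
    ring_nf

lemma D_diag_rec (n : ℕ) :
    D a b (n+2) (n+2) = (a^2 + ((n:ℚ)+1)^2 * b) * D a b n n := by
  rw [D_shift]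
  have e : D a b n (n+2) = a * D a b n (n+1) + ((n:ℚ)+1) * ((n:ℚ) - ((n:ℚ)+1)) * b * D a b n n := by
    rw [D]
  rw [e, D_diag_succ]
  ring

lemma filter_Ico_step (n : ℕ) (r : ℕ) (hr : (n+1) % 2 = r) :
    (Finset.Ico 1 (n+2)).filter (fun k => k % 2 = r)
      = insert (n+1) ((Finset.Ico 1 n).filter (fun k => k % 2 = r)) := by
  ext k
  simp only [Finset.mem_filter, Finset.mem_Ico, Finset.mem_insert]
  omega

lemma D_diag_eq : ∀ n : ℕ, D a b n n
    = (if n % 2 = 0 then 1 else a) *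
      ∏ k ∈ (Finset.Ico 1 n).filter (fun k => k % 2 = (n+1) % 2), (a^2 + (k:ℚ)^2 * b) := by
  intro n
  induction n using Nat.twoStepInduction with
  | zero => simp [D]
  | one => simp [D, Finset.Ico_self]
  | more n ih _ =>
    rw [D_diag_rec, ih]
    have hmod : (n+2+1) % 2 = (n+1) % 2 := by omega
    rw [hmod, filter_Ico_step n ((n+1)%2) (by omega)]
    rw [Finset.prod_insert (by simp)]
    have : (n+2) % 2 = n % 2 := by omega
    rw [this]
    push_cast
    ring

/-! ### The weight function `g` and the sums `W` -/

noncomputable def g (a b : ℚ) (n : ℕ) (L : List ℕ) : ℚ :=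
  a ^ (L.count 1) * b ^ (L.count 2) *
    ∏ j ∈ Finset.range (L.length - 1),
      (((n : ℚ) - L.sum + _root_.psum L (j+1)) * ((L.sum : ℚ) - _root_.psum L (j+1)))⁻¹

noncomputable def cfac (n r : ℕ) : ℚ := if r = 0 then 1 else (((n:ℚ) - r) * r)⁻¹

lemma psum_cons (k : ℕ) (L : List ℕ) (j : ℕ) :
    _root_.psum (k :: L) (j+1) = k + _root_.psum L j := by
  simp [_root_.psum, List.take_succ_cons]

lemma psum_zero (L : List ℕ) : _root_.psum L 0 = 0 := rfl

lemma psum_le (L : List ℕ) (k : ℕ) : _root_.psum L k ≤ L.sum := by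
  have := List.sum_take_add_sum_drop L k
  unfold _root_.psum
  omega

lemma g_nil : g a b n [] = 1 := by simp [g]

lemma g_cons (n : ℕ) (k : ℕ) (hk : k = 1 ∨ k = 2) (L : List ℕ) (hL : L ≠ []) :
    g a b n (k :: L) = (if k = 1 then a else b) * (((n:ℚ) - L.sum) * (L.sum : ℚ))⁻¹ * g a b n L := by
  obtain ⟨l, hl⟩ : ∃ l, L.length = l + 1 := ⟨L.length - 1, by cases L <;> simp_all⟩
  have hcount : (a : ℚ) ^ ((k :: L).count 1) * b ^ ((k :: L).count 2)
      = (if k = 1 then a else b) * (a ^ (L.count 1) * b ^ (L.count 2)) := by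
    rcases hk with rfl | rfl <;> simp [List.count_cons, pow_succ] <;> ring
  have hlen : (k :: L).length - 1 = l + 1 := by simp [hl]
  have hprod : ∏ j ∈ Finset.range ((k :: L).length - 1),
      (((n : ℚ) - (k :: L).sum + _root_.psum (k :: L) (j+1)) * (((k :: L).sum : ℚ) - _root_.psum (k :: L) (j+1)))⁻¹
      = (((n:ℚ) - L.sum) * (L.sum : ℚ))⁻¹ *
        ∏ j ∈ Finset.range (L.length - 1),
          (((n : ℚ) - L.sum + _root_.psum L (j+1)) * ((L.sum : ℚ) - _root_.psum L (j+1)))⁻¹ := by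
    rw [hlen, Finset.prod_range_succ']
    have hfst : (((n : ℚ) - (k :: L).sum + _root_.psum (k :: L) (0+1)) * (((k :: L).sum : ℚ) - _root_.psum (k :: L) (0+1)))⁻¹
        = (((n:ℚ) - L.sum) * (L.sum : ℚ))⁻¹ := by
      rw [psum_cons]
      simp only [psum_zero, List.sum_cons]
      push_cast
      ring_nf
    rw [hfst, mul_comm]
    congr 1
    rw [hl]
    simp only [Nat.add_sub_cancel]
    apply Finset.prod_congr rfl
    intro j hj
    rw [psum_cons]
    simp only [List.sum_cons]
    push_cast
    ring_nf
  rw [g, hcount, hprod, g]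
  ring

lemma g_cons_comps (n m : ℕ) (k : ℕ) (hk : k = 1 ∨ k = 2) (L : List ℕ) (hL : L ∈ comps m) :
    g a b n (k :: L) = (if k = 1 then a else b) * cfac n m * g a b n L := by
  rcases (mem_comps m L).1 hL with ⟨h1, h2⟩
  rcases Nat.eq_zero_or_pos m with rfl | hm
  · have : L = [] := by
      cases L with
      | nil => rfl
      | cons p t => rcases h1 p (by simp) with rfl | rfl <;> simp at h2
    subst this
    rcases hk with rfl | rfl <;> simp [g, cfac, List.count_cons]
  · have hL0 : L ≠ [] := by
      intro h; subst h; simp at h2; omega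
    have hmne : m ≠ 0 := by omega
    rw [g_cons a b n k hk L hL0, h2]
    simp [cfac, hmne]

noncomputable def W (a b : ℚ) (n m : ℕ) : ℚ := ∑ L ∈ comps m, g a b n L

lemma W_zero (n : ℕ) : W a b n 0 = 1 := by simp [W, comps, g_nil]

lemma W_one (n : ℕ) : W a b n 1 = a := by
  simp [W, comps, g, List.count_cons]

lemma W_rec (n m : ℕ) :
    W a b n (m+2) = a * cfac n (m+1) * W a b n (m+1) + b * cfac n m * W a b n m := by
  have hdisj : Disjoint ((comps (m+1)).image (fun L => 1 :: L)) ((comps m).image (fun L => 2 :: L)) := by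
    rw [Finset.disjoint_left]
    rintro x hx hy
    simp only [Finset.mem_image] at hx hy
    obtain ⟨M, _, rfl⟩ := hx
    obtain ⟨M', _, h⟩ := hy
    simp at h
  rw [W, show comps (m+2) = ((comps (m+1)).image (fun L => 1 :: L)) ∪ ((comps m).image (fun L => 2 :: L)) from rfl,
    Finset.sum_union hdisj,
    Finset.sum_image (by intro x _ y _ h; simpa using h),
    Finset.sum_image (by intro x _ y _ h; simpa using h)]
  rw [Finset.sum_congr rfl (fun L hL => g_cons_comps a b n (m+1) 1 (Or.inl rfl) L hL),
    Finset.sum_congr rfl (fun L hL => g_cons_comps a b n m 2 (Or.inr rfl) L hL)]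
  simp only [if_pos, if_neg]
  rw [← Finset.mul_sum, ← Finset.mul_sum]
  norm_num [W]

/-! ### `D = W * Pfac` -/

noncomputable def Pfac (n m : ℕ) : ℚ :=
  ∏ j ∈ Finset.range (m - 1), (((j:ℚ)+1) * ((n:ℚ) - ((j:ℚ)+1)))

lemma Pfac_zero (n : ℕ) : Pfac n 0 = 1 := by simp [Pfac]

lemma Pfac_one (n : ℕ) : Pfac n 1 = 1 := by simp [Pfac]

lemma Pfac_succ (n m : ℕ) :
    Pfac n (m+2) = Pfac n (m+1) * (((m:ℚ)+1) * ((n:ℚ) - ((m:ℚ)+1))) := by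
  unfold Pfac
  rw [show m + 2 - 1 = m + 1 by omega, show m + 1 - 1 = m by omega]
  rw [Finset.prod_range_succ]

lemma cfac_Pfac (n m : ℕ) (h : m < n) : cfac n m * Pfac n (m+1) = Pfac n m := by
  rcases Nat.eq_zero_or_pos m with rfl | hm
  · simp [cfac, Pfac]
  · obtain ⟨r, rfl⟩ : ∃ r, m = r + 1 := ⟨m - 1, by omega⟩
    have h1 : ((r:ℚ)+1) ≠ 0 := by positivity
    have h2 : ((n:ℚ) - ((r:ℚ)+1)) ≠ 0 := by
      have : ((r:ℚ)+1) < (n:ℚ) := by exact_mod_cast (by omega : r+1 < n)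
      intro hx; nlinarith
    simp only [cfac, if_neg (by omega : ¬ (r+1) = 0), Pfac_succ]
    push_cast
    rw [mul_comm (Pfac n (r+1)), ← mul_assoc]
    rw [show ((n:ℚ) - ((r:ℚ)+1)) * ((r:ℚ)+1) = ((r:ℚ)+1) * ((n:ℚ) - ((r:ℚ)+1)) from mul_comm _ _] 
    rw [inv_mul_cancel₀ (mul_ne_zero h1 h2), one_mul]

lemma D_eq_W (n : ℕ) : ∀ m : ℕ, m ≤ n → D a b n m = W a b n m * Pfac n m := by
  intro m
  induction m using Nat.twoStepInduction with
  | zero => intro _; simp [D, W_zero, Pfac_zero]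
  | one => intro _; simp [D, W_one, Pfac_one]
  | more m ih1 ih2 =>
    intro hm
    have hm1 : m + 1 ≤ n := by omega
    have hm0 : m ≤ n := by omega
    have hc : cfac n (m+1) * (((m:ℚ)+1) * ((n:ℚ) - ((m:ℚ)+1))) = 1 := by
      have h1 : ((m:ℚ)+1) ≠ 0 := by positivity
      have h2 : ((n:ℚ) - ((m:ℚ)+1)) ≠ 0 := by
        have : ((m:ℚ)+1) < (n:ℚ) := by exact_mod_cast (by omega : m+1 < n)
        intro hx; nlinarith
      simp only [cfac, if_neg (by omega : ¬ (m+1) = 0)]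
      push_cast
      rw [show ((n:ℚ) - ((m:ℚ)+1)) * ((m:ℚ)+1) = ((m:ℚ)+1) * ((n:ℚ) - ((m:ℚ)+1)) from mul_comm _ _]
      exact inv_mul_cancel₀ (mul_ne_zero h1 h2)
    have hcp := cfac_Pfac n m (by omega)
    rw [W_rec, Pfac_succ, D, ih1 hm0, ih2 hm1]
    linear_combination (-(a * W a b n (m+1) * Pfac n (m+1))) * hc
      + (-(b * W a b n m * (((m:ℚ)+1) * ((n:ℚ) - ((m:ℚ)+1))))) * hcp

/-! ### `spr` in terms of partial sums -/

lemma psum_reverse (L : List ℕ) (k : ℕ) (hk : k ≤ L.length) :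
    _root_.psum L.reverse k = L.sum - _root_.psum L (L.length - k) := by
  have hdrop : L.reverse.drop k = (L.take (L.length - k)).reverse := by
    rw [List.reverse_take]
    congr 1
    omega
  have h1 := List.sum_take_add_sum_drop L.reverse k
  rw [hdrop] at h1
  simp only [List.sum_reverse] at h1
  show (L.reverse.take k).sum = L.sum - (L.take (L.length - k)).sum
  omega

lemma spr_cast (n : ℕ) (L : List ℕ) (hsum : L.sum = n) (hL : L ≠ []) :
    (spr L : ℚ) = n * ∏ j ∈ Finset.range (L.length - 1), (_root_.psum L (j+1) : ℚ) := by
  obtain ⟨l, hl⟩ : ∃ l, L.length = l + 1 := ⟨L.length - 1, by cases L <;> simp_all⟩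
  rw [spr, hl]
  push_cast
  rw [Finset.prod_range_succ]
  have hlast : _root_.psum L (l+1) = n := by
    show (L.take (l+1)).sum = n
    rw [← hl, List.take_length, hsum]
  rw [hlast]
  ring

lemma spr_reverse_cast (n : ℕ) (L : List ℕ) (hsum : L.sum = n) (hL : L ≠ []) :
    (spr L.reverse : ℚ) = n * ∏ j ∈ Finset.range (L.length - 1), ((n:ℚ) - _root_.psum L (j+1)) := by
  obtain ⟨l, hl⟩ : ∃ l, L.length = l + 1 := ⟨L.length - 1, by cases L <;> simp_all⟩
  have hnat : spr L.reverse = ∏ j ∈ Finset.range (l+1), (n - _root_.psum L j) := by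
    rw [spr, List.length_reverse, hl]
    rw [← Finset.prod_range_reflect (fun j => n - _root_.psum L j) (l+1)]
    apply Finset.prod_congr rfl
    intro j hj
    simp only [Finset.mem_range] at hj
    rw [psum_reverse L (j+1) (by omega)]
    rw [hsum, hl]
    rw [show l + 1 - (j+1) = l + 1 - 1 - j by omega]
  rw [hnat]
  push_cast
  rw [Finset.prod_range_succ', psum_zero, Nat.sub_zero]
  rw [mul_comm]
  congr 1
  · rw [hl]
    simp only [Nat.add_sub_cancel]
    apply Finset.prod_congr rfl
    intro j hj
    have hle : _root_.psum L (j+1) ≤ n := by rw [← hsum]; exact psum_le L (j+1)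
    push_cast [Nat.cast_sub hle]
    ring

end MorseAux
namespace MorseAux

lemma prod_range_add_one (m : ℕ) : ∏ j ∈ Finset.range m, (j + 1) = m.factorial := by
  induction m with
  | zero => simp
  | succ k ih => rw [Finset.prod_range_succ, ih, Nat.factorial_succ]; ring

lemma prod_range_sub (m : ℕ) : ∏ j ∈ Finset.range m, (m - j) = m.factorial := by
  rw [← prod_range_add_one m, ← Finset.prod_range_reflect (fun j => j + 1) m]
  apply Finset.prod_congr rfl
  intro j hj
  simp only [Finset.mem_range] at hj
  omega

lemma Pfac_diag (n : ℕ) (hn : 0 < n) : Pfac n n = (((n-1).factorial : ℚ))^2 := by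
  rw [Pfac, Finset.prod_mul_distrib]
  have e1 : ∏ j ∈ Finset.range (n-1), ((j:ℚ)+1) = ((n-1).factorial : ℚ) := by
    rw [← prod_range_add_one (n-1)]
    push_cast
    rfl
  have e2 : ∏ j ∈ Finset.range (n-1), ((n:ℚ) - ((j:ℚ)+1)) = ((n-1).factorial : ℚ) := by
    have : ∀ j ∈ Finset.range (n-1), ((n:ℚ) - ((j:ℚ)+1)) = (((n-1-j : ℕ)):ℚ) := by
      intro j hj
      simp only [Finset.mem_range] at hj
      have : ((n - 1 - j : ℕ) : ℚ) = (n:ℚ) - 1 - j := by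
        push_cast [Nat.cast_sub (by omega : j ≤ n - 1), Nat.cast_sub (by omega : 1 ≤ n)]
        ring
      rw [this]; ring
    rw [Finset.prod_congr rfl this, ← Nat.cast_prod, prod_range_sub (n-1)]
  rw [e1, e2]
  ring

lemma sum_comp_eq (n : ℕ) (f : List ℕ → ℚ) :
    (∑ c : Composition n, if ∀ p ∈ c.blocks, p = 1 ∨ p = 2 then f c.blocks else 0)
      = ∑ L ∈ comps n, f L := by
  classical
  rw [← Finset.sum_filter]
  refine Finset.sum_bij' (fun (c : Composition n) _ => c.blocks)
    (fun L hL => ⟨L, fun {i} hi => by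
        rcases ((mem_comps n L).1 hL).1 i hi with rfl | rfl <;> norm_num,
      ((mem_comps n L).1 hL).2⟩)
    ?_ ?_ ?_ ?_ ?_
  · intro c hc
    simp only [Finset.mem_filter, Finset.mem_univ, true_and] at hc
    exact (mem_comps n c.blocks).2 ⟨hc, c.blocks_sum⟩
  · intro L hL
    simp only [Finset.mem_filter, Finset.mem_univ, true_and]
    exact ((mem_comps n L).1 hL).1
  · intro c hc
    exact Composition.ext rfl
  · intro L hL
    rfl
  · intro c hc
    rfl

lemma eval_term (n : ℕ) (hn : 0 < n) (a b : ℚ) (L : List ℕ) (hL : L ∈ comps n) :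
    (1 / ((spr L : ℚ) * spr L.reverse)) * (a ^ L.count 1 * b ^ L.count 2)
      = (n:ℚ)⁻¹ * (n:ℚ)⁻¹ * g a b n L := by
  obtain ⟨h1, h2⟩ := (mem_comps n L).1 hL
  have hL0 : L ≠ [] := by intro h; subst h; simp at h2; omega
  rw [spr_cast n L h2 hL0, spr_reverse_cast n L h2 hL0, g]
  have hg : ∏ j ∈ Finset.range (L.length - 1),
      (((n : ℚ) - L.sum + _root_.psum L (j+1)) * ((L.sum : ℚ) - _root_.psum L (j+1)))⁻¹
      = (∏ j ∈ Finset.range (L.length - 1), ((_root_.psum L (j+1) : ℚ)))⁻¹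
        * (∏ j ∈ Finset.range (L.length - 1), ((n:ℚ) - _root_.psum L (j+1)))⁻¹ := by
    rw [← Finset.prod_inv_distrib, ← Finset.prod_inv_distrib, ← Finset.prod_mul_distrib]
    apply Finset.prod_congr rfl
    intro j hj
    rw [h2, sub_self, zero_add, mul_inv]
  rw [hg, one_div]
  ring

lemma eval_morseRho (n : ℕ) (hn : 0 < n) (x : Fin 2 → ℚ) :
    eval x (morseRho n) = (n:ℚ)⁻¹ * W (x 0) (x 1) n n := by
  have step1 : eval x (morseRho n)
      = (n:ℚ) * ∑ c : Composition n,
          (if ∀ p ∈ c.blocks, p = 1 ∨ p = 2 then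
            (1 / ((spr c.blocks : ℚ) * spr c.blocks.reverse))
              * ((x 0) ^ (c.blocks.count 1) * (x 1) ^ (c.blocks.count 2))
          else 0) := by
    rw [morseRho, smul_eq_C_mul, map_mul, eval_C, map_sum]
    congr 1
    apply Finset.sum_congr rfl
    intro c _
    rw [apply_ite (eval x), map_zero, smul_eq_C_mul, map_mul, eval_C, map_mul, map_pow, map_pow,
      eval_X, eval_X]
  rw [step1,
    sum_comp_eq n (fun L => (1 / ((spr L : ℚ) * spr L.reverse))
      * ((x 0) ^ (L.count 1) * (x 1) ^ (L.count 2))),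
    Finset.sum_congr rfl (fun L hL => eval_term n hn (x 0) (x 1) L hL)]
  rw [← Finset.mul_sum, ← W]
  have hn0 : (n:ℚ) ≠ 0 := by positivity
  field_simp

lemma main_eval (n : ℕ) (hn : 0 < n) (x : Fin 2 → ℚ) :
    ((n.factorial : ℚ) * (n - 1).factorial) * eval x (morseRho n)
      = (if n % 2 = 0 then 1 else x 0) *
        ∏ k ∈ (Finset.Ico 1 n).filter (fun k => k % 2 = (n+1) % 2),
          ((x 0)^2 + (k:ℚ)^2 * (x 1)) := by
  rw [eval_morseRho n hn x, ← D_diag_eq (x 0) (x 1) n,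
    D_eq_W (x 0) (x 1) n n le_rfl, Pfac_diag n hn]
  have hfac : (n.factorial : ℚ) = (n:ℚ) * ((n-1).factorial : ℚ) := by
    rw [← Nat.mul_factorial_pred hn.ne']
    push_cast
    rfl
  rw [hfac]
  have hn0 : (n:ℚ) ≠ 0 := by positivity
  field_simp

end MorseAux

/-- Factorization of the Morse spectral residues: for `n = 2m` even,
`n!(n-1)! ρ_n(u,v) = Π_{0<k<n, k odd} (u² + k²v)`; for `n = 2m+1` odd,
`n!(n-1)! ρ_n(u,v) = u Π_{0<k<n, k even} (u² + k²v)`. -/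
theorem morseRho_factorization (n : ℕ) (hn : 0 < n) :
    (∀ m : ℕ, n = 2 * m →
      ((n.factorial : ℚ) * (n - 1).factorial) • morseRho n =
        ∏ k ∈ (Finset.Ico 1 n).filter (fun k => k % 2 = 1),
          (X 0 ^ 2 + C ((k : ℚ) ^ 2) * X 1)) ∧
    (∀ m : ℕ, n = 2 * m + 1 →
      ((n.factorial : ℚ) * (n - 1).factorial) • morseRho n =
        X 0 * ∏ k ∈ (Finset.Ico 1 n).filter (fun k => k % 2 = 0),
          (X 0 ^ 2 + C ((k : ℚ) ^ 2) * X 1)) := by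
  constructor
  · intro m hm
    apply MvPolynomial.funext
    intro x
    have hLHS : eval x (((n.factorial : ℚ) * (n - 1).factorial) • morseRho n)
        = ((n.factorial : ℚ) * (n - 1).factorial) * eval x (morseRho n) := by
      rw [smul_eq_C_mul, map_mul, eval_C]
    rw [hLHS, MorseAux.main_eval n hn x]
    have h0 : n % 2 = 0 := by omega
    have h1 : (n+1) % 2 = 1 := by omega
    have hif : (if n % 2 = 0 then (1:ℚ) else x 0) = 1 := if_pos h0
    rw [hif, h1, one_mul, map_prod]
    apply Finset.prod_congr rfl
    intro k hk
    simp
  · intro m hm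
    apply MvPolynomial.funext
    intro x
    have hLHS : eval x (((n.factorial : ℚ) * (n - 1).factorial) • morseRho n)
        = ((n.factorial : ℚ) * (n - 1).factorial) * eval x (morseRho n) := by
      rw [smul_eq_C_mul, map_mul, eval_C]
    rw [hLHS, MorseAux.main_eval n hn x]
    have h0 : (n+1) % 2 = 0 := by omega
    have hif : (if n % 2 = 0 then (1:ℚ) else x 0) = x 0 := if_neg (by omega)
    rw [hif, h0, map_mul, eval_X, map_prod]
    congr 1
    apply Finset.prod_congr rfl
    intro k hk
    simp
end

section
/- Let U_1, U_2, ... and W_1, W_2, ... be sequences in a (possibly noncommutative) ℚ-algebra related by U_n = n·W_n - Σ_{i=1}^{n-1} W_i W_{n-i}, and define the Darboux-transformed sequence by Ũ_n = -n·W_n - Σ_{i=1}^{n-1} W_i W_{n-i}. Let ρ_n = Σ_{|p|=n} (n/(s_p s_{p'})) U_{p_1}···U_{p_l} and ρ̃_n = Σ_{|p|=n} (n/(s_p s_{p'})) Ũ_{p_1}···Ũ_{p_l} be the respective spectral residue sequences. Then ρ̃_n = -ρ_n for all n. -/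
namespace DarbouxAux

set_option linter.unusedSectionVars false

lemma tri_reindex {M : Type*} [AddCommMonoid M] (m : ℕ) (G : ℕ → ℕ → M) :
    ∑ j ∈ Finset.Ico 1 (m + 1), ∑ i ∈ Finset.Ico 1 j, G i j
      = ∑ q ∈ Finset.Ico 1 (m + 1), ∑ i ∈ Finset.Ico 1 (m - q + 1), G i (i + q) := by
  rw [Finset.sum_sigma' (Finset.Ico 1 (m + 1)) (fun j => Finset.Ico 1 j) (fun j i => G i j),
    Finset.sum_sigma' (Finset.Ico 1 (m + 1)) (fun q => Finset.Ico 1 (m - q + 1))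
      (fun q i => G i (i + q))]
  refine Finset.sum_nbij' (fun p => ⟨p.1 - p.2, p.2⟩) (fun p => ⟨p.2 + p.1, p.2⟩) ?_ ?_ ?_ ?_ ?_
  · rintro ⟨j, i⟩ h
    simp only [Finset.mem_sigma, Finset.mem_Ico] at h ⊢
    omega
  · rintro ⟨q, i⟩ h
    simp only [Finset.mem_sigma, Finset.mem_Ico] at h ⊢
    omega
  · rintro ⟨j, i⟩ h
    simp only [Finset.mem_sigma, Finset.mem_Ico] at h
    show (⟨i + (j - i), i⟩ : (_ : ℕ) × ℕ) = ⟨j, i⟩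
    congr 1
    omega
  · rintro ⟨q, i⟩ h
    simp only [Finset.mem_sigma, Finset.mem_Ico] at h
    show (⟨i + q - i, i⟩ : (_ : ℕ) × ℕ) = ⟨q, i⟩
    congr 1
    omega
  · rintro ⟨j, i⟩ h
    simp only [Finset.mem_sigma, Finset.mem_Ico] at h
    have : i + (j - i) = j := by omega
    rw [this]

lemma sigma_comp_ext {k j j' : ℕ} (c : Composition (k - j)) (c' : Composition (k - j'))
    (h : j = j') (hb : c.blocks = c'.blocks) :
    (⟨j, c⟩ : Σ i : ℕ, Composition (k - i)) = ⟨j', c'⟩ := by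
  subst h
  exact congrArg _ (Composition.ext hb)

lemma comp_split {M : Type*} [AddCommMonoid M] (k : ℕ) (hk : 0 < k) (f : List ℕ → M) :
    ∑ c : Composition k, f c.blocks
      = ∑ j ∈ Finset.Ico 1 (k + 1), ∑ c : Composition (k - j), f (c.blocks ++ [j]) := by
  rw [Finset.sum_sigma' (Finset.Ico 1 (k + 1))
    (fun j => (Finset.univ : Finset (Composition (k - j)))) (fun j c => f (c.blocks ++ [j]))]
  have hne : ∀ d : Composition k, d.blocks ≠ [] := by
    intro d h
    have hs := d.blocks_sum
    rw [h] at hs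
    simp at hs
    omega
  have hfacts : ∀ d : Composition k,
      d.blocks.dropLast.sum + d.blocks.getLast (hne d) = k ∧
      0 < d.blocks.getLast (hne d) := by
    intro d
    constructor
    · have h1 : d.blocks.dropLast ++ [d.blocks.getLast (hne d)] = d.blocks :=
        List.dropLast_append_getLast (hne d)
      have h2 := congrArg List.sum h1
      rw [List.sum_append] at h2
      simpa [d.blocks_sum] using h2
    · exact d.blocks_pos (List.getLast_mem (hne d))
  refine Finset.sum_bij
    (fun d _ => (⟨d.blocks.getLast (hne d),
      ⟨d.blocks.dropLast,
        fun hi => d.blocks_pos (List.dropLast_subset _ hi),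
        by have := (hfacts d).1; omega⟩⟩ : Σ j : ℕ, Composition (k - j)))
    ?_ ?_ ?_ ?_
  · intro d _
    have h1 := (hfacts d).1
    have h2 := (hfacts d).2
    simp only [Finset.mem_sigma, Finset.mem_Ico, Finset.mem_univ, and_true]
    omega
  · intro d₁ h₁ d₂ h₂ heq
    have := congrArg (fun p : (Σ j : ℕ, Composition (k - j)) => p.2.blocks ++ [p.1]) heq
    simp only at this
    rw [List.dropLast_append_getLast (hne d₁), List.dropLast_append_getLast (hne d₂)] at this
    exact Composition.ext this
  · rintro ⟨j, c⟩ hmem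
    simp only [Finset.mem_sigma, Finset.mem_Ico, Finset.mem_univ, and_true] at hmem
    have hsum : (c.blocks ++ [j]).sum = k := by
      rw [List.sum_append]
      simp [c.blocks_sum]
      omega
    have hpos : ∀ {i : ℕ}, i ∈ c.blocks ++ [j] → 0 < i := by
      intro i hi
      rcases List.mem_append.mp hi with h | h
      · exact c.blocks_pos h
      · simp at h
        omega
    refine ⟨⟨c.blocks ++ [j], fun hi => hpos hi, hsum⟩, Finset.mem_univ _, ?_⟩
    refine sigma_comp_ext _ _ ?_ ?_
    · exact List.getLast_concat
    · simp only
      exact List.dropLast_concat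
  · intro d _
    simp only
    rw [List.dropLast_append_getLast (hne d)]

def Dq (n k : ℕ) : ℚ := (k : ℚ) * ((n : ℚ) - (k : ℚ))

lemma Dq_eq (n k : ℕ) : Dq n k = (k : ℚ) * ((n : ℚ) - (k : ℚ)) := rfl

def cM (n : ℕ) (bl : List ℕ) : ℚ :=
  (∏ i ∈ Finset.range bl.length, Dq n (psum bl (i + 1)))⁻¹
def cE (n : ℕ) (bl : List ℕ) : ℚ :=
  (∏ i ∈ Finset.range (bl.length - 1), Dq n (psum bl (i + 1)))⁻¹

lemma psum_append_le (bl : List ℕ) (j i : ℕ) (h : i ≤ bl.length) :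
    psum (bl ++ [j]) i = psum bl i := by
  unfold psum
  rw [List.take_append_of_le_length h]

lemma psum_full (bl : List ℕ) (j : ℕ) : psum (bl ++ [j]) (bl.length + 1) = bl.sum + j := by
  unfold psum
  rw [List.take_of_length_le (by simp)]
  simp

lemma cM_append (n : ℕ) (bl : List ℕ) (j : ℕ) :
    cM n (bl ++ [j]) = (Dq n (bl.sum + j))⁻¹ * cM n bl := by
  unfold cM
  rw [show (bl ++ [j]).length = bl.length + 1 by simp]
  rw [Finset.prod_range_succ, psum_full]
  rw [Finset.prod_congr rfl (fun i hi => by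
    rw [psum_append_le bl j (i+1) (by simp only [Finset.mem_range] at hi; omega)])]
  rw [mul_inv, mul_comm]

lemma cE_append (n : ℕ) (bl : List ℕ) (j : ℕ) :
    cE n (bl ++ [j]) = cM n bl := by
  unfold cE cM
  congr 1
  rw [show (bl ++ [j]).length - 1 = bl.length by simp]
  exact Finset.prod_congr rfl (fun i hi => by
    rw [psum_append_le bl j (i+1) (by simp only [Finset.mem_range] at hi; omega)])

lemma comp_zero_blocks (c : Composition 0) : c.blocks = [] := by
  have hs := c.blocks_sum
  cases h : c.blocks with
  | nil => rfl
  | cons a l =>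
    exfalso
    have ha := c.blocks_pos (h ▸ (List.mem_cons_self : a ∈ a :: l))
    rw [h] at hs
    simp at hs
    omega

variable {A : Type*} [Ring A] [Algebra ℚ A]

def Tt (V : ℕ → A) (v : ℕ → A) (k : ℕ) : A := ∑ j ∈ Finset.Ico 1 (k + 1), v (k - j) * V j

noncomputable def seq (n : ℕ) (V : ℕ → A) : ℕ → A
  | 0 => 1
  | (k + 1) => (Dq n (k + 1))⁻¹ •
      ∑ j ∈ (Finset.Ico 1 (k + 2)).attach, seq n V (k + 1 - (j : ℕ)) * V (j : ℕ)
  decreasing_by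
    have := j.2
    simp only [Finset.mem_Ico] at this
    omega

lemma seq_zero (n : ℕ) (V : ℕ → A) : seq n V 0 = 1 := by rw [seq]

lemma seq_succ (n : ℕ) (V : ℕ → A) (k : ℕ) :
    seq n V (k + 1) = (Dq n (k + 1))⁻¹ • Tt V (seq n V) (k + 1) := by
  rw [seq, Tt]
  congr 1
  exact Finset.sum_attach (Finset.Ico 1 (k + 2)) (fun j => seq n V (k + 1 - j) * V j)

lemma seq_rec (n : ℕ) (V : ℕ → A) (k : ℕ) (hk : Dq n k ≠ 0) :
    Dq n k • seq n V k = Tt V (seq n V) k := by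
  cases k with
  | zero => exact absurd (by rw [Dq_eq]; push_cast; ring) hk
  | succ m => rw [seq_succ, smul_smul, mul_inv_cancel₀ hk, one_smul]


lemma seq_comp (n : ℕ) (V : ℕ → A) (k : ℕ) :
    seq n V k = ∑ c : Composition k, cM n c.blocks • (c.blocks.map V).prod := by
  induction k using Nat.strong_induction_on with
  | _ k ih =>
    match k with
    | 0 =>
      have h1 : ∀ c : Composition 0, cM n c.blocks • ((c.blocks.map V).prod) = (1 : A) := by
        intro c
        rw [comp_zero_blocks c]
        simp [cM]
      rw [seq_zero, Finset.sum_congr rfl (fun c _ => h1 c), Finset.sum_const,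
        Finset.card_univ, composition_card]
      norm_num
    | (m + 1) =>
      have key : ∀ j ∈ Finset.Ico 1 (m + 2), seq n V (m + 1 - j) * V j
          = ∑ c : Composition (m + 1 - j), cM n c.blocks • ((c.blocks.map V).prod * V j) := by
        intro j hj
        simp only [Finset.mem_Ico] at hj
        rw [ih (m + 1 - j) (by omega), Finset.sum_mul]
        exact Finset.sum_congr rfl fun c _ => smul_mul_assoc _ _ _
      rw [seq_succ, Tt, Finset.sum_congr rfl key,
        comp_split (m + 1) (by omega) (fun bl => cM n bl • (bl.map V).prod),
        Finset.smul_sum]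
      refine Finset.sum_congr rfl fun j hj => ?_
      simp only [Finset.mem_Ico] at hj
      rw [Finset.smul_sum]
      refine Finset.sum_congr rfl fun c _ => ?_
      rw [smul_smul, cM_append, c.blocks_sum, show m + 1 - j + j = m + 1 by omega,
        List.map_append, List.prod_append]
      simp

lemma bridge (n : ℕ) (hn : 0 < n) (V : ℕ → A) :
    Tt V (seq n V) n = ∑ c : Composition n, cE n c.blocks • (c.blocks.map V).prod := by
  rw [comp_split n hn (fun bl => cE n bl • (bl.map V).prod), Tt]
  refine Finset.sum_congr rfl (fun j hj => ?_)
  rw [seq_comp, Finset.sum_mul]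
  refine Finset.sum_congr rfl (fun c _ => ?_)
  rw [smul_mul_assoc, cE_append]
  rw [List.map_append, List.prod_append]
  simp

lemma psum_le (bl : List ℕ) (j : ℕ) : psum bl j ≤ bl.sum := by
  have := List.sum_take_add_sum_drop bl j
  unfold psum
  omega

lemma psum_length (bl : List ℕ) : psum bl bl.length = bl.sum := by
  unfold psum
  rw [List.take_of_length_le (le_refl _)]

lemma psum_reverse (bl : List ℕ) (j : ℕ) :
    psum bl.reverse j = bl.sum - psum bl (bl.length - j) := by
  unfold psum
  rw [List.take_reverse, List.sum_reverse]
  have := List.sum_take_add_sum_drop bl (bl.length - j)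
  omega

lemma spr_mul_spr_reverse (bl : List ℕ) (t : ℕ) (hl : bl.length = t + 1) :
    spr bl * spr bl.reverse
      = bl.sum * bl.sum * ∏ i ∈ Finset.range t, (psum bl (i + 1) * (bl.sum - psum bl (i + 1))) := by
  have h1 : spr bl.reverse = ∏ i ∈ Finset.range bl.length, (bl.sum - psum bl i) := by
    unfold spr
    rw [List.length_reverse]
    rw [Finset.prod_congr rfl (fun j hj => psum_reverse bl (j + 1))]
    rw [← Finset.prod_range_reflect (fun i => bl.sum - psum bl i) bl.length]
    exact Finset.prod_congr rfl (fun j hj => by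
      simp only [Finset.mem_range] at hj
      congr 2
      omega)
  rw [h1]
  unfold spr
  rw [hl, Finset.prod_range_succ, Finset.prod_range_succ', ← hl, psum_length]
  have h0 : psum bl 0 = 0 := by unfold psum; simp
  rw [h0, Nat.sub_zero, Finset.prod_mul_distrib]
  ring

lemma comp_blocks_ne_nil {n : ℕ} (hn : 0 < n) (c : Composition n) : c.blocks ≠ [] := by
  intro h
  have hs := c.blocks_sum
  rw [h] at hs
  simp at hs
  omega

lemma coeff_eq (n : ℕ) (hn : 0 < n) (c : Composition n) :
    (n : ℚ) / ((spr c.blocks : ℚ) * spr c.blocks.reverse) = (n : ℚ)⁻¹ * cE n c.blocks := by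
  obtain ⟨t, ht⟩ : ∃ t, c.blocks.length = t + 1 := by
    cases h : c.blocks.length with
    | zero =>
      exact absurd (List.length_eq_zero_iff.mp h) (comp_blocks_ne_nil hn c)
    | succ t => exact ⟨t, rfl⟩
  have hsum := c.blocks_sum
  have hspr := spr_mul_spr_reverse c.blocks t ht
  rw [hsum] at hspr
  have hcE : cE n c.blocks
      = ((∏ i ∈ Finset.range t, (psum c.blocks (i + 1) * (n - psum c.blocks (i + 1))) : ℕ) : ℚ)⁻¹ := by
    unfold cE
    rw [ht]
    simp only [Nat.add_sub_cancel]
    congr 1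
    push_cast
    refine Finset.prod_congr rfl (fun i hi => ?_)
    have hle : psum c.blocks (i + 1) ≤ n := by
      have := psum_le c.blocks (i + 1)
      omega
    unfold Dq
    rw [Nat.cast_sub hle]
  rw [hcE]
  have hnq : (n : ℚ) ≠ 0 := by positivity
  rw [show ((spr c.blocks : ℚ) * spr c.blocks.reverse) = ((spr c.blocks * spr c.blocks.reverse : ℕ) : ℚ) by push_cast; ring]
  rw [hspr]
  push_cast
  rw [div_eq_mul_inv, mul_inv, mul_inv, ← mul_assoc, ← mul_assoc, mul_inv_cancel₀ hnq, one_mul]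

def Qc (W : ℕ → A) (j : ℕ) : A := ∑ i ∈ Finset.Ico 1 j, W i * W (j - i)

def bb (n : ℕ) (W a : ℕ → A) (k : ℕ) : A := ((k : ℚ) - (n : ℚ) / 2) • a k + Tt W a k

def LL (n : ℕ) (U a : ℕ → A) (k : ℕ) : A := Tt U a k - Dq n k • a k

lemma mul_U_expand {U W : ℕ → A} (hU : ∀ m : ℕ, U m = m • W m - Qc W m) (x : A) (j : ℕ) :
    x * U j = (j : ℚ) • (x * W j) - x * Qc W j := by
  rw [hU j, mul_sub, mul_smul_comm, Nat.cast_smul_eq_nsmul]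

lemma mul_Ut_expand {Ut W : ℕ → A} (hUt : ∀ m : ℕ, Ut m = -(m • W m) - Qc W m) (x : A) (j : ℕ) :
    x * Ut j = -((j : ℚ) • (x * W j)) - x * Qc W j := by
  rw [hUt j, mul_sub, mul_neg, mul_smul_comm, Nat.cast_smul_eq_nsmul]

lemma sumQ_reindex (W a : ℕ → A) (k : ℕ) (c : ℕ → ℚ) :
    ∑ j ∈ Finset.Ico 1 (k + 1), c j • (a (k - j) * Qc W j)
      = ∑ q ∈ Finset.Ico 1 (k + 1), ∑ i ∈ Finset.Ico 1 (k - q + 1),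
          c (i + q) • (a (k - q - i) * (W i * W q)) := by
  have h1 : ∀ j ∈ Finset.Ico 1 (k + 1), c j • (a (k - j) * Qc W j)
      = ∑ i ∈ Finset.Ico 1 j, c j • (a (k - j) * (W i * W (j - i))) := by
    intro j hj
    rw [Qc, Finset.mul_sum, Finset.smul_sum]
  rw [Finset.sum_congr rfl h1,
    tri_reindex k (fun i j => c j • (a (k - j) * (W i * W (j - i))))]
  refine Finset.sum_congr rfl fun q hq => Finset.sum_congr rfl fun i hi => ?_
  rw [show i + q - i = q by omega, show k - (i + q) = k - q - i by omega]

lemma sumP_mul (W a : ℕ → A) (k : ℕ) (c : ℕ → ℚ) :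
    ∑ j ∈ Finset.Ico 1 (k + 1), c j • (Tt W a (k - j) * W j)
      = ∑ q ∈ Finset.Ico 1 (k + 1), ∑ i ∈ Finset.Ico 1 (k - q + 1),
          c q • (a (k - q - i) * (W i * W q)) := by
  refine Finset.sum_congr rfl fun q hq => ?_
  rw [Tt, Finset.sum_mul, Finset.smul_sum]
  refine Finset.sum_congr rfl fun i hi => ?_
  rw [mul_assoc]

lemma sumTQ (W a : ℕ → A) (k : ℕ) :
    ∑ j ∈ Finset.Ico 1 (k + 1), Tt W a (k - j) * Qc W j
      = ∑ q ∈ Finset.Ico 1 (k + 1), ∑ x ∈ Finset.Ico 1 (k - q + 1),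
          ∑ i ∈ Finset.Ico 1 (k - q - x + 1), a (k - q - x - i) * (W i * (W x * W q)) := by
  have h1 : ∀ j ∈ Finset.Ico 1 (k + 1), Tt W a (k - j) * Qc W j
      = ∑ x ∈ Finset.Ico 1 j, Tt W a (k - j) * (W x * W (j - x)) := by
    intro j hj
    rw [Qc, Finset.mul_sum]
  rw [Finset.sum_congr rfl h1,
    tri_reindex k (fun x j => Tt W a (k - j) * (W x * W (j - x)))]
  refine Finset.sum_congr rfl fun q hq => Finset.sum_congr rfl fun x hx => ?_
  rw [show x + q - x = q by omega, show k - (x + q) = k - q - x by omega, Tt, Finset.sum_mul]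
  refine Finset.sum_congr rfl fun i hi => ?_
  rw [mul_assoc]

lemma sumQT (W a : ℕ → A) (k : ℕ) :
    ∑ j ∈ Finset.Ico 1 (k + 1), ∑ i ∈ Finset.Ico 1 (k - j + 1), (a (k - j - i) * Qc W i) * W j
      = ∑ q ∈ Finset.Ico 1 (k + 1), ∑ x ∈ Finset.Ico 1 (k - q + 1),
          ∑ i ∈ Finset.Ico 1 (k - q - x + 1), a (k - q - x - i) * (W i * (W x * W q)) := by
  refine Finset.sum_congr rfl fun j hj => ?_
  have h1 : ∀ i ∈ Finset.Ico 1 (k - j + 1), (a (k - j - i) * Qc W i) * W j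
      = ∑ x ∈ Finset.Ico 1 i, (a (k - j - i) * (W x * W (i - x))) * W j := by
    intro i hi
    rw [Qc, Finset.mul_sum, Finset.sum_mul]
  rw [Finset.sum_congr rfl h1,
    tri_reindex (k - j) (fun x i => (a (k - j - i) * (W x * W (i - x))) * W j)]
  refine Finset.sum_congr rfl fun x hx => Finset.sum_congr rfl fun i hi => ?_
  rw [show i + x - i = x by omega, show k - j - (i + x) = k - j - x - i by omega,
    mul_assoc, mul_assoc]

lemma master (n : ℕ) (W U Ut a : ℕ → A)
    (hU : ∀ m : ℕ, U m = m • W m - Qc W m)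
    (hUt : ∀ m : ℕ, Ut m = -(m • W m) - Qc W m) (k : ℕ) :
    Tt Ut (bb n W a) k - Dq n k • bb n W a k
      = ((k : ℚ) - (n : ℚ) / 2) • LL n U a k
        + ∑ j ∈ Finset.Ico 1 (k + 1), LL n U a (k - j) * W j := by
  -- expand the left-hand convolution
  have hbbUt : ∀ j ∈ Finset.Ico 1 (k + 1), bb n W a (k - j) * Ut j
      = (-((((k - j : ℕ)) : ℚ) - (n : ℚ) / 2) * (j : ℚ)) • (a (k - j) * W j)
        + (-((((k - j : ℕ)) : ℚ) - (n : ℚ) / 2)) • (a (k - j) * Qc W j)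
        + ((-(j : ℚ)) • (Tt W a (k - j) * W j)
        + (-(Tt W a (k - j) * Qc W j))) := by
    intro j hj
    rw [bb, add_mul, smul_mul_assoc, mul_Ut_expand hUt, mul_Ut_expand hUt]
    module
  have hTt1 : Tt Ut (bb n W a) k
      = (∑ j ∈ Finset.Ico 1 (k + 1),
          (-((((k - j : ℕ)) : ℚ) - (n : ℚ) / 2) * (j : ℚ)) • (a (k - j) * W j))
        + (∑ j ∈ Finset.Ico 1 (k + 1),
          (-((((k - j : ℕ)) : ℚ) - (n : ℚ) / 2)) • (a (k - j) * Qc W j))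
        + ((∑ j ∈ Finset.Ico 1 (k + 1), (-(j : ℚ)) • (Tt W a (k - j) * W j))
        + (∑ j ∈ Finset.Ico 1 (k + 1), -(Tt W a (k - j) * Qc W j))) := by
    rw [Tt, Finset.sum_congr rfl hbbUt, Finset.sum_add_distrib, Finset.sum_add_distrib,
      Finset.sum_add_distrib]
  have hDqbb : Dq n k • bb n W a k
      = (Dq n k * ((k : ℚ) - (n : ℚ) / 2)) • a k
        + ∑ j ∈ Finset.Ico 1 (k + 1), Dq n k • (a (k - j) * W j) := by
    rw [bb, smul_add, smul_smul, Tt, Finset.smul_sum]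
  have hLLk : ((k : ℚ) - (n : ℚ) / 2) • LL n U a k
      = ((∑ j ∈ Finset.Ico 1 (k + 1), ((j : ℚ) * ((k : ℚ) - (n : ℚ) / 2)) • (a (k - j) * W j))
        - ∑ j ∈ Finset.Ico 1 (k + 1), ((k : ℚ) - (n : ℚ) / 2) • (a (k - j) * Qc W j))
        - (Dq n k * ((k : ℚ) - (n : ℚ) / 2)) • a k := by
    rw [LL, smul_sub, smul_smul, mul_comm ((k : ℚ) - (n : ℚ) / 2) (Dq n k)]
    congr 1
    have hper : ∀ j ∈ Finset.Ico 1 (k + 1),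
        ((k : ℚ) - (n : ℚ) / 2) • (a (k - j) * U j)
          = ((j : ℚ) * ((k : ℚ) - (n : ℚ) / 2)) • (a (k - j) * W j)
            - ((k : ℚ) - (n : ℚ) / 2) • (a (k - j) * Qc W j) := by
      intro j hj
      rw [mul_U_expand hU]
      module
    rw [Tt, Finset.smul_sum, Finset.sum_congr rfl hper, Finset.sum_sub_distrib]
  have hb3 : ∑ j ∈ Finset.Ico 1 (k + 1), Tt U a (k - j) * W j
      = (∑ q ∈ Finset.Ico 1 (k + 1), ∑ i ∈ Finset.Ico 1 (k - q + 1),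
          (i : ℚ) • (a (k - q - i) * (W i * W q)))
        - ∑ q ∈ Finset.Ico 1 (k + 1), ∑ x ∈ Finset.Ico 1 (k - q + 1),
            ∑ i ∈ Finset.Ico 1 (k - q - x + 1), a (k - q - x - i) * (W i * (W x * W q)) := by
    have h1 : ∀ j ∈ Finset.Ico 1 (k + 1), Tt U a (k - j) * W j
        = (∑ i ∈ Finset.Ico 1 (k - j + 1), (i : ℚ) • (a (k - j - i) * (W i * W j)))
          - ∑ i ∈ Finset.Ico 1 (k - j + 1), (a (k - j - i) * Qc W i) * W j := by
      intro j hj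
      rw [Tt, Finset.sum_mul, ← Finset.sum_sub_distrib]
      refine Finset.sum_congr rfl fun i hi => ?_
      rw [mul_U_expand hU, sub_mul, smul_mul_assoc, mul_assoc]
    rw [Finset.sum_congr rfl h1, Finset.sum_sub_distrib, sumQT]
  have hLLsum : ∑ j ∈ Finset.Ico 1 (k + 1), LL n U a (k - j) * W j
      = ((∑ q ∈ Finset.Ico 1 (k + 1), ∑ i ∈ Finset.Ico 1 (k - q + 1),
          (i : ℚ) • (a (k - q - i) * (W i * W q)))
        - ∑ q ∈ Finset.Ico 1 (k + 1), ∑ x ∈ Finset.Ico 1 (k - q + 1),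
            ∑ i ∈ Finset.Ico 1 (k - q - x + 1), a (k - q - x - i) * (W i * (W x * W q)))
        - ∑ j ∈ Finset.Ico 1 (k + 1), Dq n (k - j) • (a (k - j) * W j) := by
    have hper : ∀ j ∈ Finset.Ico 1 (k + 1), LL n U a (k - j) * W j
        = Tt U a (k - j) * W j - Dq n (k - j) • (a (k - j) * W j) := by
      intro j hj
      rw [LL, sub_mul, smul_mul_assoc]
    rw [Finset.sum_congr rfl hper, Finset.sum_sub_distrib, hb3]
  -- canonicalise the three non-trivial pieces of the left-hand side
  have hA2 : ∑ j ∈ Finset.Ico 1 (k + 1),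
        (-((((k - j : ℕ)) : ℚ) - (n : ℚ) / 2)) • (a (k - j) * Qc W j)
      = ∑ q ∈ Finset.Ico 1 (k + 1), ∑ i ∈ Finset.Ico 1 (k - q + 1),
          (-((((k - (i + q) : ℕ)) : ℚ) - (n : ℚ) / 2)) • (a (k - q - i) * (W i * W q)) :=
    sumQ_reindex W a k (fun j => -((((k - j : ℕ)) : ℚ) - (n : ℚ) / 2))
  have hA3 : ∑ j ∈ Finset.Ico 1 (k + 1), (-(j : ℚ)) • (Tt W a (k - j) * W j)
      = ∑ q ∈ Finset.Ico 1 (k + 1), ∑ i ∈ Finset.Ico 1 (k - q + 1),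
          (-(q : ℚ)) • (a (k - q - i) * (W i * W q)) :=
    sumP_mul W a k (fun j => -(j : ℚ))
  have hA4 : ∑ j ∈ Finset.Ico 1 (k + 1), -(Tt W a (k - j) * Qc W j)
      = -∑ q ∈ Finset.Ico 1 (k + 1), ∑ x ∈ Finset.Ico 1 (k - q + 1),
          ∑ i ∈ Finset.Ico 1 (k - q - x + 1), a (k - q - x - i) * (W i * (W x * W q)) := by
    rw [← sumTQ W a k, Finset.sum_neg_distrib]
  have hB2 : ∑ j ∈ Finset.Ico 1 (k + 1), ((k : ℚ) - (n : ℚ) / 2) • (a (k - j) * Qc W j)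
      = ∑ q ∈ Finset.Ico 1 (k + 1), ∑ i ∈ Finset.Ico 1 (k - q + 1),
          ((k : ℚ) - (n : ℚ) / 2) • (a (k - q - i) * (W i * W q)) :=
    sumQ_reindex W a k (fun _ => (k : ℚ) - (n : ℚ) / 2)
  -- scalar recombinations
  have hS1 : ∑ j ∈ Finset.Ico 1 (k + 1),
        (-((((k - j : ℕ)) : ℚ) - (n : ℚ) / 2) * (j : ℚ)) • (a (k - j) * W j)
      = ((∑ j ∈ Finset.Ico 1 (k + 1),
          ((j : ℚ) * ((k : ℚ) - (n : ℚ) / 2)) • (a (k - j) * W j))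
        - ∑ j ∈ Finset.Ico 1 (k + 1), Dq n (k - j) • (a (k - j) * W j))
        + ∑ j ∈ Finset.Ico 1 (k + 1), Dq n k • (a (k - j) * W j) := by
    rw [← Finset.sum_sub_distrib, ← Finset.sum_add_distrib]
    refine Finset.sum_congr rfl fun j hj => ?_
    rw [← sub_smul, ← add_smul]
    congr 1
    simp only [Finset.mem_Ico] at hj
    rw [Dq_eq, Dq_eq, Nat.cast_sub (by omega : j ≤ k)]
    ring
  have hS2 : ∑ q ∈ Finset.Ico 1 (k + 1), ∑ i ∈ Finset.Ico 1 (k - q + 1),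
        (-((((k - (i + q) : ℕ)) : ℚ) - (n : ℚ) / 2)) • (a (k - q - i) * (W i * W q))
      = ((∑ q ∈ Finset.Ico 1 (k + 1), ∑ i ∈ Finset.Ico 1 (k - q + 1),
          (i : ℚ) • (a (k - q - i) * (W i * W q)))
        - ∑ q ∈ Finset.Ico 1 (k + 1), ∑ i ∈ Finset.Ico 1 (k - q + 1),
            ((k : ℚ) - (n : ℚ) / 2) • (a (k - q - i) * (W i * W q)))
        - ∑ q ∈ Finset.Ico 1 (k + 1), ∑ i ∈ Finset.Ico 1 (k - q + 1),
            (-(q : ℚ)) • (a (k - q - i) * (W i * W q)) := by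
    rw [← Finset.sum_sub_distrib, ← Finset.sum_sub_distrib]
    refine Finset.sum_congr rfl fun q hq => ?_
    rw [← Finset.sum_sub_distrib, ← Finset.sum_sub_distrib]
    refine Finset.sum_congr rfl fun i hi => ?_
    rw [← sub_smul, ← sub_smul]
    congr 1
    simp only [Finset.mem_Ico] at hq hi
    rw [Nat.cast_sub (by omega : i + q ≤ k)]
    push_cast
    ring
  -- assemble
  rw [hTt1, hDqbb, hLLk, hLLsum, hA2, hA3, hA4, hB2, hS1, hS2]
  abel

end DarbouxAux

open DarbouxAux in
/-- Theorem 3: the Darboux transformation negates spectral residues.  If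
`U_n = n W_n - Σ_{i=1}^{n-1} W_i W_{n-i}` and `Ũ_n = -n W_n - Σ_{i=1}^{n-1} W_i W_{n-i}`
(the coefficient form of `U = zW' - W²`, `Ũ = -zW' - W²`), and `ρ`, `ρ̃` are the spectral
residue sequences of `U`, `Ũ`, then `ρ̃_n = -ρ_n`. -/
theorem darboux_negates_spectral_residues {A : Type*} [Ring A] [Algebra ℚ A]
    (U Ut W ρ ρt : ℕ → A)
    (hU : ∀ n : ℕ, U n = n • W n - ∑ i ∈ Finset.Ico 1 n, W i * W (n - i))
    (hUt : ∀ n : ℕ, Ut n = -(n • W n) - ∑ i ∈ Finset.Ico 1 n, W i * W (n - i))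
    (hρ : ∀ n : ℕ, ρ n = ∑ c : Composition n,
      ((n : ℚ) / ((spr c.blocks : ℚ) * spr c.blocks.reverse)) • (c.blocks.map U).prod)
    (hρt : ∀ n : ℕ, ρt n = ∑ c : Composition n,
      ((n : ℚ) / ((spr c.blocks : ℚ) * spr c.blocks.reverse)) • (c.blocks.map Ut).prod)
    (n : ℕ) (hn : 0 < n) :
    ρt n = -ρ n := by
  have hU' : ∀ m : ℕ, U m = m • W m - Qc W m := fun m => hU m
  have hUt' : ∀ m : ℕ, Ut m = -(m • W m) - Qc W m := fun m => hUt m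
  have hnq : (n : ℚ) ≠ 0 := Nat.cast_ne_zero.mpr (by omega)
  -- nonvanishing of the denominators below the critical level
  have hDqne : ∀ k : ℕ, 1 ≤ k → k ≤ n - 1 → Dq n k ≠ 0 := by
    intro k h1 h2
    have hk0 : (0 : ℚ) < (k : ℚ) := by exact_mod_cast h1
    have hkn : (k : ℚ) < (n : ℚ) := by exact_mod_cast (by omega : k < n)
    rw [Dq_eq]
    exact ne_of_gt (mul_pos hk0 (by linarith))
  -- the recursion defect vanishes below the critical level
  have hLL0 : ∀ k : ℕ, k ≤ n - 1 → LL n U (seq n U) k = 0 := by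
    intro k hk
    match k with
    | 0 =>
      rw [LL]
      rw [show Tt U (seq n U) 0 = 0 from by rw [Tt]; simp]
      rw [show Dq n 0 = 0 from by rw [Dq_eq]; push_cast; ring]
      simp
    | (m + 1) =>
      rw [LL, seq_rec n U (m + 1) (hDqne (m + 1) (by omega) hk), sub_self]
  -- the intertwined sequence agrees with the Darboux sequence below the critical level
  have hbct : ∀ k : ℕ, k ≤ n - 1 → bb n W (seq n U) k = (-(n : ℚ)/2) • seq n Ut k := by
    intro k
    induction k using Nat.strong_induction_on with
    | _ k ih =>
      intro hk
      match k with
      | 0 =>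
        rw [bb, seq_zero, seq_zero]
        rw [show Tt W (seq n U) 0 = 0 from by rw [Tt]; simp]
        rw [add_zero]
        congr 1
        push_cast
        ring
      | (m + 1) =>
        have hdq : Dq n (m + 1) ≠ 0 := hDqne (m + 1) (by omega) hk
        have hm := master n W U Ut (seq n U) hU' hUt' (m + 1)
        have hz2 : ∀ j ∈ Finset.Ico 1 (m + 2), LL n U (seq n U) (m + 1 - j) * W j = 0 := by
          intro j hj
          simp only [Finset.mem_Ico] at hj
          rw [hLL0 (m + 1 - j) (by omega), zero_mul]
        rw [hLL0 (m + 1) hk, smul_zero, Finset.sum_congr rfl hz2, Finset.sum_const_zero,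
          add_zero, sub_eq_zero] at hm
        have hTt : Tt Ut (bb n W (seq n U)) (m + 1) = (-(n : ℚ)/2) • Tt Ut (seq n Ut) (m + 1) := by
          rw [Tt, Tt, Finset.smul_sum]
          refine Finset.sum_congr rfl fun j hj => ?_
          simp only [Finset.mem_Ico] at hj
          rw [ih (m + 1 - j) (by omega) (by omega), smul_mul_assoc]
        have h5 : Dq n (m + 1) • bb n W (seq n U) (m + 1)
            = Dq n (m + 1) • ((-(n : ℚ)/2) • seq n Ut (m + 1)) := by
          calc Dq n (m + 1) • bb n W (seq n U) (m + 1)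
              = Tt Ut (bb n W (seq n U)) (m + 1) := hm.symm
            _ = (-(n : ℚ)/2) • Tt Ut (seq n Ut) (m + 1) := hTt
            _ = (-(n : ℚ)/2) • (Dq n (m + 1) • seq n Ut (m + 1)) := by
                rw [seq_rec n Ut (m + 1) hdq]
            _ = Dq n (m + 1) • ((-(n : ℚ)/2) • seq n Ut (m + 1)) := smul_comm _ _ _
        have h6 := congrArg (fun z : A => (Dq n (m + 1))⁻¹ • z) h5
        simp only [inv_smul_smul₀ hdq] at h6
        exact h6
  -- the master identity at the critical level `k = n`
  have hm := master n W U Ut (seq n U) hU' hUt' n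
  have hz2 : ∀ j ∈ Finset.Ico 1 (n + 1), LL n U (seq n U) (n - j) * W j = 0 := by
    intro j hj
    simp only [Finset.mem_Ico] at hj
    rw [hLL0 (n - j) (by omega), zero_mul]
  have hdqnn : Dq n n = 0 := by rw [Dq_eq]; ring
  rw [Finset.sum_congr rfl hz2, Finset.sum_const_zero, add_zero, hdqnn, zero_smul,
    sub_zero, LL, hdqnn, zero_smul, sub_zero] at hm
  have hTt : Tt Ut (bb n W (seq n U)) n = (-(n : ℚ)/2) • Tt Ut (seq n Ut) n := by
    rw [Tt, Tt, Finset.smul_sum]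
    refine Finset.sum_congr rfl fun j hj => ?_
    simp only [Finset.mem_Ico] at hj
    rw [hbct (n - j) (by omega), smul_mul_assoc]
  rw [hTt] at hm
  -- hence the two critical convolutions are negatives of each other
  have hkey : Tt Ut (seq n Ut) n = -Tt U (seq n U) n := by
    have h2 := congrArg (fun z : A => ((-2 : ℚ)/(n : ℚ)) • z) hm
    simp only [smul_smul] at h2
    rw [show (-2 : ℚ)/(n : ℚ) * (-(n : ℚ)/2) = 1 by field_simp,
      show (-2 : ℚ)/(n : ℚ) * ((n : ℚ) - (n : ℚ)/2) = -1 by field_simp; ring,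
      one_smul, neg_one_smul] at h2
    exact h2
  -- identify the residues with the critical convolutions
  have hρn : ρ n = (n : ℚ)⁻¹ • Tt U (seq n U) n := by
    have h1 : ∀ c : Composition n,
        ((n : ℚ) / ((spr c.blocks : ℚ) * spr c.blocks.reverse)) • (c.blocks.map U).prod
          = (n : ℚ)⁻¹ • (cE n c.blocks • (c.blocks.map U).prod) := by
      intro c
      rw [coeff_eq n hn c, mul_smul]
    rw [hρ n, Finset.sum_congr rfl (fun c _ => h1 c), ← Finset.smul_sum, ← bridge n hn U]
  have hρtn : ρt n = (n : ℚ)⁻¹ • Tt Ut (seq n Ut) n := by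
    have h1 : ∀ c : Composition n,
        ((n : ℚ) / ((spr c.blocks : ℚ) * spr c.blocks.reverse)) • (c.blocks.map Ut).prod
          = (n : ℚ)⁻¹ • (cE n c.blocks • (c.blocks.map Ut).prod) := by
      intro c
      rw [coeff_eq n hn c, mul_smul]
    rw [hρt n, Finset.sum_congr rfl (fun c _ => h1 c), ← Finset.smul_sum, ← bridge n hn Ut]
  rw [hρtn, hkey, smul_neg, ← hρn]
end

section
/- Let W_1, W_2, ... be a sequence in a (possibly noncommutative) ℚ-algebra, and for each composition p = (p_1,...,p_l) of n with l odd define the rational function of ν given by the ordered product (W_{p_l}/(ν-n))···(W_{p_4}/(-s_4))(W_{p_3}/(ν-s_3))(W_{p_2}/(-s_2))(W_{p_1}/(ν-s_1)), where odd-indexed partial sums contribute factors 1/(ν-s_j) and even-indexed partial sums contribute factors 1/(-s_j). Then the residue at ν = n of the sum δ_n of these expressions over all odd-length compositions of n equals Σ_{|p|=n, ℓ(p) odd} (-1)^{(ℓ(p)-1)/2} (1/(q_p q_{p'})) W_{p_1}···W_{p_l}, where q_p = s_2 s_4 ··· s_{l-1}. -/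
def qpr (L : List ℕ) : ℕ := ∏ j ∈ Finset.range ((L.length - 1) / 2), psum L (2 * j + 2)

section aux

/-- reversal of a composition -/
def crev {n : ℕ} (c : Composition n) : Composition n :=
  ⟨c.blocks.reverse, fun {i} hi => c.blocks_pos (List.mem_reverse.1 hi),
   by rw [List.sum_reverse]; exact c.blocks_sum⟩

lemma crev_crev {n : ℕ} (c : Composition n) : crev (crev c) = c := by
  cases c; simp [crev]

lemma psum_add_psum_reverse (L : List ℕ) {j : ℕ} (h : j ≤ L.length) :
    psum L.reverse j + psum L (L.length - j) = L.sum := by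
  unfold psum
  rw [List.take_reverse, List.sum_reverse, Nat.add_comm, List.sum_take_add_sum_drop]

lemma psum_pos {L : List ℕ} (hpos : ∀ x ∈ L, 0 < x) {j : ℕ} (hj : 1 ≤ j)
    (hj' : j ≤ L.length) : 0 < psum L j := by
  have : L.take j ≠ [] := by
    apply List.ne_nil_of_length_pos
    rw [List.length_take]; omega
  obtain ⟨x, hx⟩ := List.exists_mem_of_ne_nil _ this
  have hxL : x ∈ L := List.mem_of_mem_take hx
  calc 0 < x := hpos x hxL
    _ ≤ (L.take j).sum := List.single_le_sum (fun y _ => Nat.zero_le y) x hx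

lemma psum_lt {L : List ℕ} (hpos : ∀ x ∈ L, 0 < x) {j : ℕ} (hj : j < L.length) :
    psum L j < L.sum := by
  have hd : L.drop j ≠ [] := by
    apply List.ne_nil_of_length_pos
    rw [List.length_drop]; omega
  obtain ⟨x, hx⟩ := List.exists_mem_of_ne_nil _ hd
  have h1 : (L.take j).sum + (L.drop j).sum = L.sum := List.sum_take_add_sum_drop L j
  have h2 : 0 < (L.drop j).sum := by
    calc 0 < x := hpos x (List.mem_of_mem_drop hx)
      _ ≤ (L.drop j).sum := List.single_le_sum (fun y _ => Nat.zero_le y) x hx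
  unfold psum; omega

lemma prod_ite_even_odd {k : ℕ} (a b : ℕ → ℝ) :
    (∏ j ∈ Finset.range (2 * k), (if j % 2 = 0 then a j else b j)) =
      (∏ i ∈ Finset.range k, a (2 * i)) * ∏ i ∈ Finset.range k, b (2 * i + 1) := by
  induction k with
  | zero => simp
  | succ k ih =>
    have h1 : 2 * (k + 1) = (2 * k + 1) + 1 := by ring
    rw [h1, Finset.prod_range_succ, Finset.prod_range_succ, ih,
      Finset.prod_range_succ, Finset.prod_range_succ]
    have e1 : (2 * k) % 2 = 0 := by omega
    have e2 : (2 * k + 1) % 2 = 1 := by omega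
    rw [e1, e2]
    simp only [if_pos rfl]
    norm_num
    ring

end aux

/-- The residue at `ν = n` of
`δ_n = Σ_{|p|=n, ℓ(p) odd} (W_{p_l}/(ν-n))⋯(W_{p_3}/(ν-s_3))(W_{p_2}/(-s_2))(W_{p_1}/(ν-s_1))`
— where odd-indexed partial sums contribute factors `1/(ν-s_j)` and even-indexed ones
contribute `1/(-s_j)`, and the residue of each scalar coefficient is the limit `r c` of
`(ν-n)` times the coefficient as `ν → n` — equals
`Σ_{|p|=n, ℓ(p) odd} (-1)^{(ℓ(p)-1)/2} (1/(q_p q_{p'})) W_{p_1}⋯W_{p_l}`. -/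
theorem residue_of_delta {A : Type*} [Ring A] [Algebra ℚ A] (W : ℕ → A)
    (n : ℕ) (hn : 0 < n) (r : Composition n → ℚ)
    (hr : ∀ c : Composition n, Odd c.length →
      Filter.Tendsto
        (fun ν : ℝ => (ν - (n : ℝ)) * ∏ j ∈ Finset.range c.length,
          (if j % 2 = 0 then (ν - (psum c.blocks (j + 1) : ℝ))⁻¹
           else (-(psum c.blocks (j + 1) : ℝ))⁻¹))
        (nhdsWithin (n : ℝ) {(n : ℝ)}ᶜ) (nhds ((r c : ℚ) : ℝ))) :
    (∑ c : Composition n,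
        if Odd c.length then (r c) • (c.blocks.reverse.map W).prod else 0) =
      ∑ c : Composition n,
        if Odd c.length then
          ((-1 : ℚ) ^ ((c.length - 1) / 2) / ((qpr c.blocks : ℚ) * qpr c.blocks.reverse)) •
            (c.blocks.map W).prod
        else 0 := by
  -- Step 1 : reindex RHS through reversal
  have hbij : Function.Bijective (crev (n := n)) :=
    Function.Involutive.bijective crev_crev
  rw [← Function.Bijective.sum_comp hbij
    (fun c => if Odd c.length then
      ((-1 : ℚ) ^ ((c.length - 1) / 2) / ((qpr c.blocks : ℚ) * qpr c.blocks.reverse)) •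
        (c.blocks.map W).prod else 0)]
  refine Finset.sum_congr rfl fun c _ => ?_
  have hlen : (crev c).length = c.length := by
    simp [crev, Composition.length]
  by_cases hodd : Odd c.length
  · rw [if_pos hodd, if_pos (hlen ▸ hodd)]
    -- identify the pieces
    have hblocks : (crev c).blocks = c.blocks.reverse := rfl
    obtain ⟨k, hk⟩ := hodd
    -- key: value of r c
    have key : r c = (-1 : ℚ) ^ k / ((qpr c.blocks.reverse : ℚ) * qpr c.blocks) := by
      have hlen' : c.blocks.length = 2 * k + 1 := hk
      have hsum : c.blocks.sum = n := c.blocks_sum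
      have hpos : ∀ x ∈ c.blocks, 0 < x := fun x hx => c.blocks_pos hx
      have hlt : ∀ j, j < 2 * k + 1 → psum c.blocks j < n := fun j hj => by
        have := psum_lt hpos (L := c.blocks) (j := j) (by omega)
        omega
      have hple : ∀ j, psum c.blocks j ≤ n := fun j => by
        unfold psum
        have := List.sum_take_add_sum_drop c.blocks j
        omega
      have hppos : ∀ j, 1 ≤ j → j ≤ 2 * k + 1 → 0 < psum c.blocks j := fun j h1 h2 =>
        psum_pos hpos h1 (by omega)
      have hslast : psum c.blocks (2 * k + 1) = n := by
        unfold psum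
        rw [← hlen', List.take_length, hsum]
      set g : ℕ → ℝ → ℝ := fun j ν =>
        if j % 2 = 0 then (ν - (psum c.blocks (j + 1) : ℝ))⁻¹
        else (-(psum c.blocks (j + 1) : ℝ))⁻¹ with hg
      have h1 : Filter.Tendsto (fun ν : ℝ => ∏ j ∈ Finset.range (2 * k), g j ν)
          (nhdsWithin (n : ℝ) {(n : ℝ)}ᶜ)
          (nhds (∏ j ∈ Finset.range (2 * k), g j (n : ℝ))) := by
        apply Filter.Tendsto.mono_left _ nhdsWithin_le_nhds
        apply tendsto_finset_prod
        intro j hj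
        simp only [Finset.mem_range] at hj
        by_cases hje : j % 2 = 0
        · simp only [hg, if_pos hje]
          have hne : (n : ℝ) - (psum c.blocks (j + 1) : ℝ) ≠ 0 := by
            have := hlt (j + 1) (by omega)
            have : (psum c.blocks (j + 1) : ℝ) < (n : ℝ) := by exact_mod_cast this
            linarith
          exact (Filter.Tendsto.sub Filter.tendsto_id tendsto_const_nhds).inv₀ hne
        · simp only [hg, if_neg hje]
          exact tendsto_const_nhds
      have heqn : ∀ ν ∈ ({(n : ℝ)}ᶜ : Set ℝ),
          ((ν - (n : ℝ)) * ∏ j ∈ Finset.range c.length, g j ν) =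
            ∏ j ∈ Finset.range (2 * k), g j ν := by
        intro ν hν
        have hν' : ν - (n : ℝ) ≠ 0 := sub_ne_zero.2 hν
        rw [hk, Finset.prod_range_succ]
        have hg2k : g (2 * k) ν = (ν - (n : ℝ))⁻¹ := by
          simp only [hg]
          rw [if_pos (by omega : 2 * k % 2 = 0), hslast]
        rw [hg2k]
        field_simp
      have hfeq : (fun ν : ℝ => (ν - (n : ℝ)) * ∏ j ∈ Finset.range c.length, g j ν)
          =ᶠ[nhdsWithin (n : ℝ) {(n : ℝ)}ᶜ]
          (fun ν : ℝ => ∏ j ∈ Finset.range (2 * k), g j ν) :=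
        Filter.eventuallyEq_of_mem self_mem_nhdsWithin heqn
      have h1' : Filter.Tendsto
          (fun ν : ℝ => (ν - (n : ℝ)) * ∏ j ∈ Finset.range c.length, g j ν)
          (nhdsWithin (n : ℝ) {(n : ℝ)}ᶜ)
          (nhds (∏ j ∈ Finset.range (2 * k), g j (n : ℝ))) := h1.congr' hfeq.symm
      have hru : ((r c : ℚ) : ℝ) = ∏ j ∈ Finset.range (2 * k), g j (n : ℝ) :=
        tendsto_nhds_unique (hr c ⟨k, hk⟩) h1'
      rw [prod_ite_even_odd (fun j => ((n : ℝ) - (psum c.blocks (j + 1) : ℝ))⁻¹)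
        (fun j => (-(psum c.blocks (j + 1) : ℝ))⁻¹)] at hru
      have hq1 : (qpr c.blocks : ℝ) = ∏ i ∈ Finset.range k, (psum c.blocks (2 * i + 2) : ℝ) := by
        unfold qpr
        rw [hlen']
        have : (2 * k + 1 - 1) / 2 = k := by omega
        rw [this]
        push_cast
        rfl
      have hq2 : (qpr c.blocks.reverse : ℝ)
          = ∏ i ∈ Finset.range k, ((n : ℝ) - (psum c.blocks (2 * i + 1) : ℝ)) := by
        unfold qpr
        rw [List.length_reverse, hlen']
        have h2 : (2 * k + 1 - 1) / 2 = k := by omega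
        rw [h2]
        have hterm : ∀ j ∈ Finset.range k,
            (psum c.blocks.reverse (2 * j + 2) : ℝ)
              = (n : ℝ) - (psum c.blocks (2 * (k - 1 - j) + 1) : ℝ) := by
          intro j hj
          simp only [Finset.mem_range] at hj
          have hkey := psum_add_psum_reverse c.blocks (j := 2 * j + 2) (by omega)
          rw [hlen', hsum] at hkey
          have hidx : 2 * k + 1 - (2 * j + 2) = 2 * (k - 1 - j) + 1 := by omega
          rw [hidx] at hkey
          have : psum c.blocks.reverse (2 * j + 2)
              = n - psum c.blocks (2 * (k - 1 - j) + 1) := by omega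
          rw [this]
          have hle := hple (2 * (k - 1 - j) + 1)
          push_cast [hle]
          ring
        push_cast
        rw [Finset.prod_congr rfl hterm]
        exact Finset.prod_range_reflect (fun i => (n : ℝ) - (psum c.blocks (2 * i + 1) : ℝ)) k
      -- now conclude in ℚ via ℝ
      have hQ1ne : (qpr c.blocks : ℝ) ≠ 0 := by
        rw [hq1]
        apply Finset.prod_ne_zero_iff.2
        intro i hi
        simp only [Finset.mem_range] at hi
        have := hppos (2 * i + 2) (by omega) (by omega)
        positivity
      have hQ2ne : (qpr c.blocks.reverse : ℝ) ≠ 0 := by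
        rw [hq2]
        apply Finset.prod_ne_zero_iff.2
        intro i hi
        simp only [Finset.mem_range] at hi
        have := hlt (2 * i + 1) (by omega)
        have : (psum c.blocks (2 * i + 1) : ℝ) < (n : ℝ) := by exact_mod_cast this
        intro hcon
        linarith
      have hfinal : ((r c : ℚ) : ℝ)
          = (((-1 : ℚ) ^ k / ((qpr c.blocks.reverse : ℚ) * qpr c.blocks) : ℚ) : ℝ) := by
        push_cast
        rw [hru, hq2, hq1]
        have e1 : ∀ i ∈ Finset.range k, (-(psum c.blocks (2 * i + 1 + 1) : ℝ))⁻¹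
            = (-1) * ((psum c.blocks (2 * i + 2) : ℝ))⁻¹ := by
          intro i _
          rw [show 2 * i + 1 + 1 = 2 * i + 2 from rfl, inv_neg]
          ring
        rw [Finset.prod_congr rfl e1, Finset.prod_mul_distrib, Finset.prod_const]
        simp only [Finset.prod_inv_distrib, Finset.card_range]
        rw [hq2] at hQ2ne
        rw [hq1] at hQ1ne
        field_simp
      exact_mod_cast hfinal
    rw [hblocks, key]
    have hk2 : ((crev c).length - 1) / 2 = k := by rw [hlen]; omega
    rw [hk2, List.reverse_reverse]
  · rw [if_neg hodd, if_neg (hlen ▸ hodd)]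
end
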